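/- arXiv:1301.6194 — 4 statements merged into one kernel-verified Lean document; each statement's English description precedes it below -/
import Mathlib

section
/- Let z ∈ ℝ^{2n} be any configuration of n point vortices with distinct positions. Then the Hessian matrix of the Hamiltonian anti-commutes with K: D²H(z) K = −K D²H(z). -/
noncomputable section

open Finset Polynomial

abbrev Idx (n : ℕ) := Fin n × Fin 2

/-- The Hamiltonian of the planar `n`-vortex problem. -/
def vortexH (n : ℕ) (Γ : Fin n → ℝ) (z : Idx n → ℝ) : ℝ :=
  -∑ i : Fin n, ∑ j ∈ Finset.Ioi i, Γ i * Γ j *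
    Real.log (Real.sqrt ((z (i, 0) - z (j, 0)) ^ 2 + (z (i, 1) - z (j, 1)) ^ 2))

/-- The total vortex angular momentum `L = ∑_{i<j} Γᵢ Γⱼ`. -/
def vortexL (n : ℕ) (Γ : Fin n → ℝ) : ℝ :=
  ∑ i : Fin n, ∑ j ∈ Finset.Ioi i, Γ i * Γ j

/-- The gradient of the Hamiltonian (vector of partial derivatives). -/
def gradH (n : ℕ) (Γ : Fin n → ℝ) (z : Idx n → ℝ) : Idx n → ℝ := fun a =>
  fderiv ℝ (vortexH n Γ) z (Pi.single a 1)

/-- The Hessian matrix `D²H(z)` of second partial derivatives. -/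
def D2H (n : ℕ) (Γ : Fin n → ℝ) (z : Idx n → ℝ) : Matrix (Idx n) (Idx n) ℝ :=
  Matrix.of fun a b =>
    fderiv ℝ (fun w => fderiv ℝ (vortexH n Γ) w (Pi.single b 1)) z (Pi.single a 1)

/-- The block-diagonal rotation matrix `K` with `n` copies of `J = [[0,1],[-1,0]]`. -/
def Kmat (n : ℕ) : Matrix (Idx n) (Idx n) ℝ :=
  Matrix.of fun a b => if a.1 = b.1 then !![0, 1; -1, 0] a.2 b.2 else 0

/-- The diagonal matrix `M = diag(Γ₁,Γ₁,…,Γₙ,Γₙ)` of circulations. -/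
def Mmat (n : ℕ) (Γ : Fin n → ℝ) : Matrix (Idx n) (Idx n) ℝ :=
  Matrix.diagonal fun a => Γ a.1

/-- The vortex positions are pairwise distinct. -/
def Distinct (n : ℕ) (z : Idx n → ℝ) : Prop :=
  ∀ i j : Fin n, i ≠ j → (z (i, 0), z (i, 1)) ≠ (z (j, 0), z (j, 1))

/-- The angular impulse `I(z) = (1/2) ∑ᵢ Γᵢ ‖zᵢ‖²`. -/
def angImpulse (n : ℕ) (Γ : Fin n → ℝ) (z : Idx n → ℝ) : ℝ :=
  (1 / 2) * ∑ i : Fin n, Γ i * ((z (i, 0)) ^ 2 + (z (i, 1)) ^ 2)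

/-- `z₀` is a relative equilibrium with angular velocity `ω ≠ 0`:
`∇H(z₀) + ω M z₀ = 0`. -/
def IsRelEq (n : ℕ) (Γ : Fin n → ℝ) (z₀ : Idx n → ℝ) (ω : ℝ) : Prop :=
  Distinct n z₀ ∧ ω ≠ 0 ∧ gradH n Γ z₀ + ω • (Mmat n Γ).mulVec z₀ = 0

/-- The stability matrix `B = K (M⁻¹ D²H(z₀) + ω Id)`. -/
def Bmat (n : ℕ) (Γ : Fin n → ℝ) (z₀ : Idx n → ℝ) (ω : ℝ) : Matrix (Idx n) (Idx n) ℝ :=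
  Kmat n * ((Mmat n Γ)⁻¹ * D2H n Γ z₀ + ω • (1 : Matrix (Idx n) (Idx n) ℝ))

/-- The multiset of (complex) eigenvalues of the stability matrix `B`, with multiplicity. -/
def specB (n : ℕ) (Γ : Fin n → ℝ) (z₀ : Idx n → ℝ) (ω : ℝ) : Multiset ℂ :=
  (((Bmat n Γ z₀ ω).map Complex.ofReal).charpoly).roots

/-- The trivial eigenvalues `0, 0, ωi, -ωi` of the stability matrix. -/
def trivialEvs (ω : ℝ) : Multiset ℂ := {0, 0, (ω : ℂ) * Complex.I, -((ω : ℂ) * Complex.I)}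

/-- `V = span{z₀, Kz₀}`. -/
def Vspan (n : ℕ) (z₀ : Idx n → ℝ) : Submodule ℝ (Idx n → ℝ) :=
  Submodule.span ℝ {z₀, (Kmat n).mulVec z₀}

/-- The `M`-orthogonal complement `V^⊥` of `V = span{z₀, Kz₀}` (over ℝ). -/
def VperpR (n : ℕ) (Γ : Fin n → ℝ) (z₀ : Idx n → ℝ) : Submodule ℝ (Idx n → ℝ) :=
  LinearMap.ker (Matrix.mulVecLin (Matrix.of
    ![(Mmat n Γ).mulVec z₀, (Mmat n Γ).mulVec ((Kmat n).mulVec z₀)]))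

/-- The complexification of `V^⊥`. -/
def VperpC (n : ℕ) (Γ : Fin n → ℝ) (z₀ : Idx n → ℝ) : Submodule ℂ (Idx n → ℂ) :=
  LinearMap.ker (Matrix.mulVecLin (Matrix.of
    ![fun a => ((Mmat n Γ).mulVec z₀ a : ℂ),
      fun a => ((Mmat n Γ).mulVec ((Kmat n).mulVec z₀) a : ℂ)]))

/-- The complexified stability matrix as a linear map on `ℂ^{2n}`. -/
def BC (n : ℕ) (Γ : Fin n → ℝ) (z₀ : Idx n → ℝ) (ω : ℝ) : (Idx n → ℂ) →ₗ[ℂ] (Idx n → ℂ) :=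
  Matrix.mulVecLin ((Bmat n Γ z₀ ω).map Complex.ofReal)

/-- `z₀` is linearly stable: the `2n - 4` nontrivial eigenvalues of `B` are nonzero and purely
imaginary, and the restriction of `B` to `V^⊥` is diagonalizable over `ℂ`. -/
def IsLinearlyStable (n : ℕ) (Γ : Fin n → ℝ) (z₀ : Idx n → ℝ) (ω : ℝ) : Prop :=
  (∃ ν : Multiset ℂ, specB n Γ z₀ ω = trivialEvs ω + ν ∧ ∀ μ ∈ ν, μ ≠ 0 ∧ μ.re = 0) ∧
  ∃ h : ∀ w ∈ VperpC n Γ z₀, BC n Γ z₀ ω w ∈ VperpC n Γ z₀,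
    (⨆ μ : ℂ, Module.End.eigenspace ((BC n Γ z₀ ω).restrict h) μ) = ⊤

/-- `z₀` is spectrally stable: nontrivial eigenvalues are nonzero and purely imaginary. -/
def IsSpectrallyStable (n : ℕ) (Γ : Fin n → ℝ) (z₀ : Idx n → ℝ) (ω : ℝ) : Prop :=
  ∃ ν : Multiset ℂ, specB n Γ z₀ ω = trivialEvs ω + ν ∧ ∀ μ ∈ ν, μ ≠ 0 ∧ μ.re = 0

/-- `z₀` is degenerate: some nontrivial eigenvalue of `B` is zero. -/
def IsDegenerate (n : ℕ) (Γ : Fin n → ℝ) (z₀ : Idx n → ℝ) (ω : ℝ) : Prop :=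
  ∃ ν : Multiset ℂ, specB n Γ z₀ ω = trivialEvs ω + ν ∧ 0 ∈ ν

/-- `z₀` is unstable: some nontrivial eigenvalue of `B` has nonzero real part. -/
def IsUnstable (n : ℕ) (Γ : Fin n → ℝ) (z₀ : Idx n → ℝ) (ω : ℝ) : Prop :=
  ∃ ν : Multiset ℂ, specB n Γ z₀ ω = trivialEvs ω + ν ∧ ∃ μ ∈ ν, μ.re ≠ 0

/-- Rotation `e^{Jθ}` applied to each vortex of the configuration `z`. -/
def rotConf (n : ℕ) (θ : ℝ) (z : Idx n → ℝ) : Idx n → ℝ := fun a =>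
  if a.2 = 0 then Real.cos θ * z (a.1, 0) + Real.sin θ * z (a.1, 1)
  else -Real.sin θ * z (a.1, 0) + Real.cos θ * z (a.1, 1)

/-- The Euclidean norm on `ℝ^{2n}`. -/
def enorm2 (n : ℕ) (v : Idx n → ℝ) : ℝ := Real.sqrt (∑ a : Idx n, (v a) ^ 2)

namespace VortexAux

variable {n : ℕ}

/-- squared distance between vortices `k` and `l`. -/
def qf (w : Idx n → ℝ) (k l : Fin n) : ℝ :=
  (w (k,0) - w (l,0))^2 + (w (k,1) - w (l,1))^2

def pr (a : Idx n) : (Idx n → ℝ) →L[ℝ] ℝ := ContinuousLinearMap.proj a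

lemma pr_apply (a : Idx n) (w : Idx n → ℝ) : pr a w = w a := rfl

lemma hasFDerivAt_coord (k l : Fin n) (u : Fin 2) (w : Idx n → ℝ) :
    HasFDerivAt (fun w : Idx n → ℝ => w (k,u) - w (l,u)) (pr (k,u) - pr (l,u)) w :=
  ((pr (k,u)).hasFDerivAt).sub ((pr (l,u)).hasFDerivAt)

def dq (w : Idx n → ℝ) (k l : Fin n) : (Idx n → ℝ) →L[ℝ] ℝ :=
  (2*(w (k,0) - w (l,0))) • (pr (k,0) - pr (l,0)) +
  (2*(w (k,1) - w (l,1))) • (pr (k,1) - pr (l,1))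

lemma hasFDerivAt_qf (k l : Fin n) (w : Idx n → ℝ) :
    HasFDerivAt (fun w => qf w k l) (dq w k l) w := by
  have h0 := hasFDerivAt_coord k l 0 w
  have h1 := hasFDerivAt_coord k l 1 w
  have h := ((h0.fun_mul h0).fun_add (h1.fun_mul h1))
  have hq : (fun w : Idx n → ℝ => qf w k l)
      = fun w => (w (k,0) - w (l,0)) * (w (k,0) - w (l,0))
        + (w (k,1) - w (l,1)) * (w (k,1) - w (l,1)) := by
    funext w; simp [qf, pow_two]
  rw [hq]
  convert! h using 1
  ext v
  simp [dq, pr_apply]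
  ring

end VortexAux

namespace VortexAux
variable {n : ℕ}

def LH (Γ : Fin n → ℝ) (w : Idx n → ℝ) : (Idx n → ℝ) →L[ℝ] ℝ :=
  -∑ i : Fin n, ∑ j ∈ Finset.Ioi i, (Γ i * Γ j * 2⁻¹) • ((qf w i j)⁻¹ • dq w i j)

lemma hasFDerivAt_H (Γ : Fin n → ℝ) (w : Idx n → ℝ)
    (hw : ∀ k l : Fin n, k ≠ l → qf w k l ≠ 0) :
    HasFDerivAt (vortexH n Γ) (LH Γ w) w := by
  have hrw : vortexH n Γ
      = fun w => -∑ i : Fin n, ∑ j ∈ Finset.Ioi i,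
          (Γ i * Γ j * 2⁻¹) * Real.log (qf w i j) := by
    funext w
    unfold vortexH
    congr 1
    refine Finset.sum_congr rfl fun i _ => Finset.sum_congr rfl fun j _ => ?_
    rw [Real.log_sqrt (by positivity)]
    unfold qf
    ring
  rw [hrw]
  unfold LH
  refine HasFDerivAt.neg ?_
  refine HasFDerivAt.fun_sum fun i _ => HasFDerivAt.fun_sum fun j hj => ?_
  have hij : i ≠ j := ne_of_lt (Finset.mem_Ioi.mp hj)
  exact ((hasFDerivAt_qf i j w).log (hw i j hij)).const_mul _

end VortexAux

namespace VortexAux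
variable {n : ℕ}

def eb (b a : Idx n) : ℝ := if a = b then 1 else 0

def nf (b : Idx n) (w : Idx n → ℝ) (k l : Fin n) : ℝ :=
  2*(w (k,0) - w (l,0))*(eb b (k,0) - eb b (l,0)) +
  2*(w (k,1) - w (l,1))*(eb b (k,1) - eb b (l,1))

def gg (Γ : Fin n → ℝ) (b : Idx n) (w : Idx n → ℝ) : ℝ :=
  -∑ k : Fin n, ∑ l ∈ Finset.Ioi k, (Γ k * Γ l * 2⁻¹) * ((qf w k l)⁻¹ * nf b w k l)

lemma LH_apply (Γ : Fin n → ℝ) (w : Idx n → ℝ) (b : Idx n) :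
    LH Γ w (Pi.single b 1) = gg Γ b w := by
  unfold LH gg
  rw [ContinuousLinearMap.neg_apply, ContinuousLinearMap.sum_apply]
  congr 1
  refine Finset.sum_congr rfl fun k _ => ?_
  rw [ContinuousLinearMap.sum_apply]
  refine Finset.sum_congr rfl fun l _ => ?_
  simp only [ContinuousLinearMap.smul_apply, dq, ContinuousLinearMap.add_apply,
    ContinuousLinearMap.sub_apply, pr_apply, smul_eq_mul, nf, eb, Pi.single_apply]

def dn (b : Idx n) (k l : Fin n) : (Idx n → ℝ) →L[ℝ] ℝ :=
  (2*(eb b (k,0) - eb b (l,0))) • (pr (k,0) - pr (l,0)) +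
  (2*(eb b (k,1) - eb b (l,1))) • (pr (k,1) - pr (l,1))

lemma hasFDerivAt_nf (b : Idx n) (k l : Fin n) (w : Idx n → ℝ) :
    HasFDerivAt (fun w => nf b w k l) (dn b k l) w := by
  have h0 := hasFDerivAt_coord (n := n) k l 0 w
  have h1 := hasFDerivAt_coord (n := n) k l 1 w
  have h := (((h0.const_mul 2).mul_const (eb b (k,0) - eb b (l,0)))).fun_add
    (((h1.const_mul 2).mul_const (eb b (k,1) - eb b (l,1))))
  convert! h using 1
  ext v
  simp [dn, pr_apply]
  ring

/-- the derivative of `gg Γ b` (the second-derivative linear map). -/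
def D2L (Γ : Fin n → ℝ) (b : Idx n) (z : Idx n → ℝ) : (Idx n → ℝ) →L[ℝ] ℝ :=
  -∑ k : Fin n, ∑ l ∈ Finset.Ioi k, (Γ k * Γ l * 2⁻¹) •
    ((qf z k l)⁻¹ • dn b k l + nf b z k l • ((-(qf z k l ^ 2)⁻¹) • dq z k l))

lemma hasFDerivAt_gg (Γ : Fin n → ℝ) (b : Idx n) (z : Idx n → ℝ)
    (hz : ∀ k l : Fin n, k ≠ l → qf z k l ≠ 0) :
    HasFDerivAt (gg Γ b) (D2L Γ b z) z := by
  unfold gg D2L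
  refine HasFDerivAt.neg ?_
  refine HasFDerivAt.fun_sum fun k _ => HasFDerivAt.fun_sum fun l hl => ?_
  have hkl : k ≠ l := ne_of_lt (Finset.mem_Ioi.mp hl)
  have hq0 := hz k l hkl
  have hinv : HasFDerivAt (fun w => (qf w k l)⁻¹)
      ((-(qf z k l ^ 2)⁻¹) • dq z k l) z :=
    (hasDerivAt_inv hq0).comp_hasFDerivAt z (hasFDerivAt_qf k l z)
  exact (hinv.mul (hasFDerivAt_nf b k l z)).const_mul _

end VortexAux

namespace VortexAux
variable {n : ℕ}

lemma qf_ne (z : Idx n → ℝ)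
    (hz : ∀ i j : Fin n, i ≠ j → (z (i, 0), z (i, 1)) ≠ (z (j, 0), z (j, 1))) :
    ∀ k l : Fin n, k ≠ l → qf z k l ≠ 0 := by
  intro k l hkl h
  apply hz k l hkl
  have h0 : (z (k,0) - z (l,0))^2 = 0 := by
    unfold qf at h; nlinarith [sq_nonneg (z (k,0) - z (l,0)), sq_nonneg (z (k,1) - z (l,1))]
  have h1 : (z (k,1) - z (l,1))^2 = 0 := by
    unfold qf at h; nlinarith [sq_nonneg (z (k,0) - z (l,0)), sq_nonneg (z (k,1) - z (l,1))]
  have e0 : z (k,0) = z (l,0) := by nlinarith [h0]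
  have e1 : z (k,1) = z (l,1) := by nlinarith [h1]
  rw [e0, e1]

lemma eventually_qf (z : Idx n → ℝ) (hz : ∀ k l : Fin n, k ≠ l → qf z k l ≠ 0) :
    ∀ᶠ w in nhds z, ∀ k l : Fin n, k ≠ l → qf w k l ≠ 0 := by
  rw [Filter.eventually_all]
  intro k
  rw [Filter.eventually_all]
  intro l
  by_cases h : k = l
  · filter_upwards with w h' using absurd h h'
  · have hc : Continuous fun w : Idx n → ℝ => qf w k l := by
      unfold qf; fun_prop
    filter_upwards [hc.continuousAt.eventually_ne (hz k l h)] with w hw _ using hw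

lemma D2H_eq (Γ : Fin n → ℝ) (z : Idx n → ℝ)
    (hz : ∀ k l : Fin n, k ≠ l → qf z k l ≠ 0) (a b : Idx n) :
    D2H n Γ z a b = D2L Γ b z (Pi.single a 1) := by
  have hev : (fun w => fderiv ℝ (vortexH n Γ) w (Pi.single b 1)) =ᶠ[nhds z] gg Γ b := by
    filter_upwards [eventually_qf z hz] with w hw
    rw [(hasFDerivAt_H Γ w hw).fderiv, LH_apply]
  show fderiv ℝ (fun w => fderiv ℝ (vortexH n Γ) w (Pi.single b 1)) z (Pi.single a 1) = _
  rw [hev.fderiv_eq, (hasFDerivAt_gg Γ b z hz).fderiv]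

def dnval (a b : Idx n) (k l : Fin n) : ℝ :=
  2*(eb b (k,0) - eb b (l,0))*(eb a (k,0) - eb a (l,0)) +
  2*(eb b (k,1) - eb b (l,1))*(eb a (k,1) - eb a (l,1))

lemma D2L_apply (Γ : Fin n → ℝ) (b : Idx n) (z : Idx n → ℝ) (a : Idx n) :
    D2L Γ b z (Pi.single a 1) = -∑ k : Fin n, ∑ l ∈ Finset.Ioi k,
      (Γ k * Γ l * 2⁻¹) * ((qf z k l)⁻¹ * dnval a b k l
        - (qf z k l ^ 2)⁻¹ * (nf a z k l * nf b z k l)) := by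
  unfold D2L
  rw [ContinuousLinearMap.neg_apply, ContinuousLinearMap.sum_apply]
  congr 1
  refine Finset.sum_congr rfl fun k _ => ?_
  rw [ContinuousLinearMap.sum_apply]
  refine Finset.sum_congr rfl fun l _ => ?_
  simp only [ContinuousLinearMap.smul_apply, ContinuousLinearMap.add_apply,
    ContinuousLinearMap.sub_apply, dn, dq, pr_apply, smul_eq_mul,
    dnval, nf, eb, Pi.single_apply]
  ring

end VortexAux

namespace VortexAux
variable {n : ℕ}

lemma eb_mk (i k : Fin n) (u v : Fin 2) :
    eb (i,u) (k,v) = if v = u then (if k = i then (1:ℝ) else 0) else 0 := by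
  simp only [eb, Prod.mk.injEq]
  by_cases h1 : v = u <;> by_cases h2 : k = i <;> simp [h1, h2]

lemma idA (Γ : Fin n → ℝ) (z : Idx n → ℝ)
    (hz : ∀ k l : Fin n, k ≠ l → qf z k l ≠ 0) (i j : Fin n) :
    D2H n Γ z (i,0) (j,1) = D2H n Γ z (i,1) (j,0) := by
  rw [D2H_eq Γ z hz, D2H_eq Γ z hz, D2L_apply, D2L_apply]
  congr 1
  refine Finset.sum_congr rfl fun k _ => Finset.sum_congr rfl fun l _ => ?_
  simp only [dnval, nf, eb_mk, if_neg (by decide : ¬(0:Fin 2) = 1),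
    if_neg (by decide : ¬(1:Fin 2) = 0), if_pos rfl]
  ring

lemma idB (Γ : Fin n → ℝ) (z : Idx n → ℝ)
    (hz : ∀ k l : Fin n, k ≠ l → qf z k l ≠ 0) (i j : Fin n) :
    D2H n Γ z (i,0) (j,0) = -D2H n Γ z (i,1) (j,1) := by
  rw [D2H_eq Γ z hz, D2H_eq Γ z hz, D2L_apply, D2L_apply, neg_neg,
    neg_eq_iff_add_eq_zero]
  rw [← Finset.sum_add_distrib]
  refine Finset.sum_eq_zero fun k _ => ?_
  rw [← Finset.sum_add_distrib]
  refine Finset.sum_eq_zero fun l hl => ?_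
  have hq0 := hz k l (ne_of_lt (Finset.mem_Ioi.mp hl))
  simp only [dnval, nf, eb_mk, if_neg (by decide : ¬(0:Fin 2) = 1),
    if_neg (by decide : ¬(1:Fin 2) = 0), if_pos rfl]
  field_simp
  unfold qf
  ring

end VortexAux

namespace VortexAux
variable {n : ℕ}

lemma mulK_right (A : Matrix (Idx n) (Idx n) ℝ) (a : Idx n) (j : Fin n) (t : Fin 2) :
    (A * Kmat n) a (j,t) = A a (j,0) * (!![0,1;-1,0] : Matrix (Fin 2) (Fin 2) ℝ) 0 t
      + A a (j,1) * (!![0,1;-1,0] : Matrix (Fin 2) (Fin 2) ℝ) 1 t := by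
  rw [Matrix.mul_apply, Fintype.sum_prod_type]
  rw [Finset.sum_eq_single j]
  · rw [Fin.sum_univ_two]; simp [Kmat]
  · intro x _ hx
    apply Finset.sum_eq_zero; intro u _
    simp [Kmat, hx]
  · intro h; exact absurd (Finset.mem_univ j) h

lemma mulK_left (A : Matrix (Idx n) (Idx n) ℝ) (i : Fin n) (s : Fin 2) (b : Idx n) :
    (Kmat n * A) (i,s) b = (!![0,1;-1,0] : Matrix (Fin 2) (Fin 2) ℝ) s 0 * A (i,0) b
      + (!![0,1;-1,0] : Matrix (Fin 2) (Fin 2) ℝ) s 1 * A (i,1) b := by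
  rw [Matrix.mul_apply, Fintype.sum_prod_type]
  rw [Finset.sum_eq_single i]
  · rw [Fin.sum_univ_two]; simp [Kmat]
  · intro x _ hx
    apply Finset.sum_eq_zero; intro u _
    simp [Kmat, Ne.symm hx]
  · intro h; exact absurd (Finset.mem_univ i) h

end VortexAux


/-- The Hessian of the Hamiltonian anti-commutes with `K`:
`D²H(z) K = -K D²H(z)`. -/
theorem hessian_anticommutes_K (n : ℕ) (hn : 2 ≤ n) (Γ : Fin n → ℝ)
    (hΓ : ∀ i, Γ i ≠ 0) (z : Idx n → ℝ) (hz : Distinct n z) :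
    D2H n Γ z * Kmat n = -(Kmat n * D2H n Γ z) := by
  have hz' := VortexAux.qf_ne z hz
  ext a b
  obtain ⟨i, s⟩ := a
  obtain ⟨j, t⟩ := b
  rw [Matrix.neg_apply, VortexAux.mulK_right, VortexAux.mulK_left]
  fin_cases s <;> fin_cases t <;>
    simp [VortexAux.idA Γ z hz' i j, VortexAux.idB Γ z hz' i j]
end
end

section
/- Let z ∈ ℝ^{2n} be any configuration of n point vortices with distinct positions. Then the characteristic polynomials of the matrices D²H(z) and M⁻¹D²H(z) are even polynomials: if q(λ) denotes either characteristic polynomial, then q(λ) = q(−λ) for all λ. -/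
noncomputable section

open Finset Polynomial

namespace CPE
variable {n : ℕ}

def Qf (i j : Fin n) (w : Idx n → ℝ) : ℝ :=
  (w (i,0) - w (j,0))^2 + (w (i,1) - w (j,1))^2

def pr (a : Idx n) : (Idx n → ℝ) →L[ℝ] ℝ := ContinuousLinearMap.proj a

def Qd (i j : Fin n) (w : Idx n → ℝ) : (Idx n → ℝ) →L[ℝ] ℝ :=
  (2*(w (i,0) - w (j,0))) • (pr (i,0) - pr (j,0))
    + (2*(w (i,1) - w (j,1))) • (pr (i,1) - pr (j,1))

lemma hasFDerivAt_coord (i j : Fin n) (γ : Fin 2) (w : Idx n → ℝ) :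
    HasFDerivAt (fun w : Idx n → ℝ => w (i,γ) - w (j,γ)) (pr (i,γ) - pr (j,γ)) w :=
  (hasFDerivAt_apply (i,γ) w).sub (hasFDerivAt_apply (j,γ) w)

lemma hasFDerivAt_Qf (i j : Fin n) (w : Idx n → ℝ) :
    HasFDerivAt (Qf i j) (Qd i j w) w := by
  have h0 := hasFDerivAt_coord i j 0 w
  have h1 := hasFDerivAt_coord i j 1 w
  have hs := ((h0.mul h0).add (h1.mul h1))
  have : Qf i j = fun w : Idx n → ℝ =>
      (w (i,0) - w (j,0)) * (w (i,0) - w (j,0)) + (w (i,1) - w (j,1)) * (w (i,1) - w (j,1)) := by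
    funext w; simp [Qf, sq]
  rw [this]
  refine hs.congr_fderiv ?_
  unfold Qd
  module

def Hd (Γ : Fin n → ℝ) (w : Idx n → ℝ) : (Idx n → ℝ) →L[ℝ] ℝ :=
  -∑ i : Fin n, ∑ j ∈ Finset.Ioi i,
    (Γ i * Γ j / 2 * (Qf i j w)⁻¹) • Qd i j w

lemma vortexH_eq (Γ : Fin n → ℝ) :
    vortexH n Γ = fun w => -∑ i : Fin n, ∑ j ∈ Finset.Ioi i,
      (Γ i * Γ j / 2) * Real.log (Qf i j w) := by
  funext w
  unfold vortexH
  congr 1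
  refine Finset.sum_congr rfl fun i _ => Finset.sum_congr rfl fun j _ => ?_
  rw [show Real.sqrt ((w (i, 0) - w (j, 0)) ^ 2 + (w (i, 1) - w (j, 1)) ^ 2)
      = Real.sqrt (Qf i j w) from rfl, Real.log_sqrt (by unfold Qf; positivity)]
  unfold Qf; ring

lemma hasFDerivAt_H (Γ : Fin n → ℝ) (w : Idx n → ℝ)
    (hw : ∀ i j : Fin n, i ≠ j → Qf i j w ≠ 0) :
    HasFDerivAt (vortexH n Γ) (Hd Γ w) w := by
  rw [vortexH_eq]
  have hs : HasFDerivAt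
      (fun w => ∑ i : Fin n, ∑ j ∈ Finset.Ioi i, (Γ i * Γ j / 2) * Real.log (Qf i j w))
      (∑ i : Fin n, ∑ j ∈ Finset.Ioi i, (Γ i * Γ j / 2 * (Qf i j w)⁻¹) • Qd i j w) w := by
    apply HasFDerivAt.fun_sum; intro i _
    apply HasFDerivAt.fun_sum; intro j hj
    have hne : i ≠ j := ne_of_lt (Finset.mem_Ioi.mp hj)
    have hlog := (hasFDerivAt_Qf i j w).log (hw i j hne)
    have := hlog.const_mul (Γ i * Γ j / 2)
    refine this.congr_fderiv ?_
    rw [smul_smul]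
  exact hs.neg

def dc (i j : Fin n) (b : Idx n) (γ : Fin 2) : ℝ :=
  (if (i,γ) = b then (1:ℝ) else 0) - (if (j,γ) = b then 1 else 0)

lemma pr_single (a b : Idx n) : pr a (Pi.single b 1) = if a = b then (1:ℝ) else 0 := by
  simp [pr, Pi.single_apply]

lemma Qd_single (i j : Fin n) (w : Idx n → ℝ) (b : Idx n) :
    Qd i j w (Pi.single b 1)
      = 2*(w (i,0)-w (j,0)) * dc i j b 0 + 2*(w (i,1)-w (j,1)) * dc i j b 1 := by
  simp only [Qd, dc, ContinuousLinearMap.add_apply, ContinuousLinearMap.smul_apply,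
    ContinuousLinearMap.sub_apply, pr_single, smul_eq_mul]

def Sval (i j : Fin n) (b : Idx n) (w : Idx n → ℝ) : ℝ :=
  2*(w (i,0)-w (j,0)) * dc i j b 0 + 2*(w (i,1)-w (j,1)) * dc i j b 1

def Sd (i j : Fin n) (b : Idx n) : (Idx n → ℝ) →L[ℝ] ℝ :=
  (2 * dc i j b 0) • (pr (i,0) - pr (j,0)) + (2 * dc i j b 1) • (pr (i,1) - pr (j,1))

lemma hasFDerivAt_Sval (i j : Fin n) (b : Idx n) (w : Idx n → ℝ) :
    HasFDerivAt (Sval i j b) (Sd i j b) w := by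
  have h0 := (hasFDerivAt_coord i j 0 w).const_mul (2 * dc i j b 0)
  have h1 := (hasFDerivAt_coord i j 1 w).const_mul (2 * dc i j b 1)
  have := h0.add h1
  have he : Sval i j b = fun w : Idx n → ℝ =>
      (2 * dc i j b 0) * (w (i,0) - w (j,0)) + (2 * dc i j b 1) * (w (i,1) - w (j,1)) := by
    funext w; unfold Sval; ring
  rw [he]; exact this

def Gfun (Γ : Fin n → ℝ) (b : Idx n) (w : Idx n → ℝ) : ℝ := Hd Γ w (Pi.single b 1)

lemma Gfun_eq (Γ : Fin n → ℝ) (b : Idx n) :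
    Gfun Γ b = fun w => -∑ i : Fin n, ∑ j ∈ Finset.Ioi i,
      (Γ i * Γ j / 2) * ((Qf i j w)⁻¹ * Sval i j b w) := by
  funext w
  simp only [Gfun, Hd, ContinuousLinearMap.neg_apply, ContinuousLinearMap.sum_apply,
    ContinuousLinearMap.smul_apply, Qd_single, smul_eq_mul]
  congr 1
  refine Finset.sum_congr rfl fun i _ => Finset.sum_congr rfl fun j _ => ?_
  unfold Sval; ring

def Gd (Γ : Fin n → ℝ) (b : Idx n) (z : Idx n → ℝ) : (Idx n → ℝ) →L[ℝ] ℝ :=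
  -∑ i : Fin n, ∑ j ∈ Finset.Ioi i,
    (Γ i * Γ j / 2) • ((Qf i j z)⁻¹ • Sd i j b
      + Sval i j b z • ((-((Qf i j z)^2)⁻¹) • Qd i j z))

lemma hasFDerivAt_Gfun (Γ : Fin n → ℝ) (b : Idx n) (z : Idx n → ℝ)
    (hz : ∀ i j : Fin n, i ≠ j → Qf i j z ≠ 0) :
    HasFDerivAt (Gfun Γ b) (Gd Γ b z) z := by
  rw [Gfun_eq]
  have hs : HasFDerivAt
      (fun w => ∑ i : Fin n, ∑ j ∈ Finset.Ioi i, (Γ i * Γ j / 2) * ((Qf i j w)⁻¹ * Sval i j b w))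
      (∑ i : Fin n, ∑ j ∈ Finset.Ioi i,
        (Γ i * Γ j / 2) • ((Qf i j z)⁻¹ • Sd i j b
          + Sval i j b z • ((-((Qf i j z)^2)⁻¹) • Qd i j z))) z := by
    apply HasFDerivAt.fun_sum; intro i _
    apply HasFDerivAt.fun_sum; intro j hj
    have hne : i ≠ j := ne_of_lt (Finset.mem_Ioi.mp hj)
    have hinv : HasFDerivAt (fun w => (Qf i j w)⁻¹)
        ((-((Qf i j z)^2)⁻¹) • Qd i j z) z :=
      (hasDerivAt_inv (hz i j hne)).comp_hasFDerivAt z (hasFDerivAt_Qf i j z)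
    have hmul := hinv.mul (hasFDerivAt_Sval i j b z)
    have := hmul.const_mul (Γ i * Γ j / 2)
    exact this
  exact hs.neg

def U (n : ℕ) : Set (Idx n → ℝ) := {w | ∀ i j : Fin n, i ≠ j → Qf i j w ≠ 0}

lemma contQf (i j : Fin n) : Continuous (Qf i j) := by
  unfold Qf; fun_prop

lemma isOpen_U : IsOpen (U n) := by
  have : U n = ⋂ (i : Fin n), ⋂ (j : Fin n), {w | i ≠ j → Qf i j w ≠ 0} := by
    ext w; simp [U, Set.mem_iInter]
  rw [this]
  refine isOpen_iInter_of_finite fun i => isOpen_iInter_of_finite fun j => ?_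
  by_cases h : i = j
  · simp [h]
  · have he : {w : Idx n → ℝ | i ≠ j → Qf i j w ≠ 0} = Qf i j ⁻¹' ({0}ᶜ) := by
      ext w; simp [h]
    rw [he]
    exact isOpen_compl_singleton.preimage (contQf i j)

lemma mem_U_of_distinct {z : Idx n → ℝ} (hz : Distinct n z) : z ∈ U n := by
  intro i j hij h
  apply hz i j hij
  have h0 : z (i,0) - z (j,0) = 0 := by
    have := sq_nonneg (z (i,0) - z (j,0)); have := sq_nonneg (z (i,1) - z (j,1))
    unfold Qf at h; nlinarith
  have h1 : z (i,1) - z (j,1) = 0 := by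
    have := sq_nonneg (z (i,0) - z (j,0)); have := sq_nonneg (z (i,1) - z (j,1))
    unfold Qf at h; nlinarith
  have : z (i,0) = z (j,0) := by linarith
  have : z (i,1) = z (j,1) := by linarith
  simp_all

lemma D2H_apply (Γ : Fin n → ℝ) (z : Idx n → ℝ) (hz : Distinct n z) (a b : Idx n) :
    D2H n Γ z a b = Gd Γ b z (Pi.single a 1) := by
  have hmem := mem_U_of_distinct hz
  have hev : (fun w => fderiv ℝ (vortexH n Γ) w (Pi.single b 1)) =ᶠ[nhds z] Gfun Γ b := by
    filter_upwards [isOpen_U.mem_nhds hmem] with w hw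
    rw [(hasFDerivAt_H Γ w hw).fderiv]; rfl
  show fderiv ℝ (fun w => fderiv ℝ (vortexH n Γ) w (Pi.single b 1)) z (Pi.single a 1) = _
  rw [hev.fderiv_eq, (hasFDerivAt_Gfun Γ b z hmem).fderiv]

lemma Gd_single (Γ : Fin n → ℝ) (z : Idx n → ℝ) (a b : Idx n) :
    Gd Γ b z (Pi.single a 1) = -∑ i : Fin n, ∑ j ∈ Finset.Ioi i,
      (Γ i * Γ j / 2) * ((Qf i j z)⁻¹
          * (2 * dc i j b 0 * dc i j a 0 + 2 * dc i j b 1 * dc i j a 1)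
        + Sval i j b z * (-((Qf i j z)^2)⁻¹
          * (2*(z (i,0)-z (j,0)) * dc i j a 0 + 2*(z (i,1)-z (j,1)) * dc i j a 1))) := by
  simp only [Gd, ContinuousLinearMap.neg_apply, ContinuousLinearMap.sum_apply,
    ContinuousLinearMap.smul_apply, ContinuousLinearMap.add_apply, Qd_single, smul_eq_mul]
  congr 1
  refine Finset.sum_congr rfl fun i _ => Finset.sum_congr rfl fun j _ => ?_
  simp only [Sd, ContinuousLinearMap.add_apply, ContinuousLinearMap.smul_apply,
    ContinuousLinearMap.sub_apply, pr_single, smul_eq_mul, dc]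

def dd (i j k : Fin n) : ℝ := (if i = k then 1 else 0) - (if j = k then 1 else 0)

lemma dc_eq (i j k : Fin n) (α γ : Fin 2) :
    dc i j (k, α) γ = dd i j k * (if γ = α then 1 else 0) := by
  unfold dc dd
  by_cases h1 : i = k <;> by_cases h2 : γ = α <;> by_cases h3 : j = k <;>
    simp [Prod.ext_iff, h1, h2, h3]

lemma symm_block (Γ : Fin n → ℝ) (z : Idx n → ℝ) (hz : Distinct n z) (k l : Fin n) :
    D2H n Γ z (k,0) (l,1) = D2H n Γ z (k,1) (l,0) := by
  rw [D2H_apply Γ z hz, D2H_apply Γ z hz, Gd_single, Gd_single]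
  congr 1
  refine Finset.sum_congr rfl fun i _ => Finset.sum_congr rfl fun j _ => ?_
  simp only [Sval, dc_eq, show ((0:Fin 2) = 1) = False by simp, show ((1:Fin 2) = 0) = False by simp,
    if_true, if_false, eq_self_iff_true]
  ring

lemma trace_block (Γ : Fin n → ℝ) (z : Idx n → ℝ) (hz : Distinct n z) (k l : Fin n) :
    D2H n Γ z (k,0) (l,0) + D2H n Γ z (k,1) (l,1) = 0 := by
  rw [D2H_apply Γ z hz, D2H_apply Γ z hz, Gd_single, Gd_single, ← neg_add,
    ← Finset.sum_add_distrib, neg_eq_zero]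
  refine Finset.sum_eq_zero fun i _ => ?_
  rw [← Finset.sum_add_distrib]
  refine Finset.sum_eq_zero fun j hj => ?_
  have hne : i ≠ j := ne_of_lt (Finset.mem_Ioi.mp hj)
  have hQ : Qf i j z ≠ 0 := mem_U_of_distinct hz i j hne
  have hQdef : Qf i j z = (z (i,0) - z (j,0))^2 + (z (i,1) - z (j,1))^2 := rfl
  simp only [Sval, dc_eq, show ((0:Fin 2) = 1) = False by simp, show ((1:Fin 2) = 0) = False by simp,
    if_true, if_false, eq_self_iff_true]
  rw [hQdef] at hQ ⊢
  field_simp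
  ring

lemma Kmul_zero (X : Matrix (Idx n) (Idx n) ℝ) (k : Fin n) (b : Idx n) :
    (Kmat n * X) (k, 0) b = X (k, 1) b := by
  rw [Matrix.mul_apply, Fintype.sum_prod_type]
  simp [Kmat, Fin.sum_univ_two, Finset.sum_ite_eq]

lemma Kmul_one (X : Matrix (Idx n) (Idx n) ℝ) (k : Fin n) (b : Idx n) :
    (Kmat n * X) (k, 1) b = -X (k, 0) b := by
  rw [Matrix.mul_apply, Fintype.sum_prod_type]
  simp [Kmat, Fin.sum_univ_two, Finset.sum_ite_eq]

lemma mulK_zero (X : Matrix (Idx n) (Idx n) ℝ) (a : Idx n) (l : Fin n) :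
    (X * Kmat n) a (l, 0) = -X a (l, 1) := by
  rw [Matrix.mul_apply, Fintype.sum_prod_type]
  simp [Kmat, Fin.sum_univ_two, Finset.sum_ite_eq']

lemma mulK_one (X : Matrix (Idx n) (Idx n) ℝ) (a : Idx n) (l : Fin n) :
    (X * Kmat n) a (l, 1) = X a (l, 0) := by
  rw [Matrix.mul_apply, Fintype.sum_prod_type]
  simp [Kmat, Fin.sum_univ_two, Finset.sum_ite_eq']

lemma KK : Kmat n * Kmat n = -1 := by
  ext a b
  obtain ⟨k, α⟩ := a
  fin_cases α
  · show (Kmat n * Kmat n) (k, 0) b = (-1 : Matrix (Idx n) (Idx n) ℝ) (k, 0) b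
    rw [Kmul_zero]
    simp [Kmat, Matrix.one_apply, Prod.ext_iff]
    rcases b with ⟨l, β⟩
    fin_cases β <;> by_cases h : k = l <;> simp [h]
  · show (Kmat n * Kmat n) (k, 1) b = (-1 : Matrix (Idx n) (Idx n) ℝ) (k, 1) b
    rw [Kmul_one]
    simp [Kmat, Matrix.one_apply, Prod.ext_iff]
    rcases b with ⟨l, β⟩
    fin_cases β <;> by_cases h : k = l <;> simp [h]

lemma K_comm_diag (d : Fin n → ℝ) :
    Kmat n * Matrix.diagonal (fun a : Idx n => d a.1)
      = Matrix.diagonal (fun a : Idx n => d a.1) * Kmat n := by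
  ext a b
  rw [Matrix.mul_diagonal, Matrix.diagonal_mul]
  by_cases h : a.1 = b.1
  · rw [h, mul_comm]
  · simp [Kmat, h]

lemma eval_charpoly {m : Type*} [Fintype m] [DecidableEq m] (M : Matrix m m ℝ) (x : ℝ) :
    M.charpoly.eval x = (x • (1 : Matrix m m ℝ) - M).det := by
  rw [Matrix.charpoly, ← Polynomial.coe_evalRingHom, RingHom.map_det]
  congr 1
  ext i j
  by_cases h : i = j <;>
    simp [Matrix.charmatrix_apply, h, Matrix.one_apply, Matrix.smul_apply, Matrix.sub_apply,
      Matrix.diagonal_apply]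

lemma even_eval {m : Type*} [Fintype m] [DecidableEq m] (hcard : Even (Fintype.card m))
    (K A : Matrix m m ℝ) (hKK : K * K = -1) (hconj : K * A * K = A) (x : ℝ) :
    A.charpoly.eval x = A.charpoly.eval (-x) := by
  have hu1 : K * (-K) = 1 := by rw [mul_neg, hKK, neg_neg]
  rw [eval_charpoly, eval_charpoly]
  have key : (-x) • (1 : Matrix m m ℝ) - A = (-1 : ℝ) • (K * (x • (1 : Matrix m m ℝ) - A) * (-K)) := by
    have h1 : K * (x • (1 : Matrix m m ℝ) - A) * (-K)
        = x • (K * (-K)) - K * A * (-K) := by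
      rw [Matrix.mul_sub, Matrix.sub_mul, Matrix.mul_smul, Matrix.mul_one, Matrix.smul_mul]
    rw [h1, hu1, mul_neg, hconj, smul_sub]
    rw [smul_smul]
    norm_num
  rw [key, Matrix.det_smul, Matrix.det_mul, Matrix.det_mul]
  have hdet : K.det * (-K).det = 1 := by rw [← Matrix.det_mul, hu1, Matrix.det_one]
  rw [Even.neg_one_pow hcard, one_mul]
  linear_combination -((x • (1 : Matrix m m ℝ) - A).det) * hdet

lemma KAK (Γ : Fin n → ℝ) (z : Idx n → ℝ) (hz : Distinct n z) :
    Kmat n * D2H n Γ z * Kmat n = D2H n Γ z := by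
  rw [mul_assoc]
  ext a b
  obtain ⟨k, α⟩ := a
  obtain ⟨l, β⟩ := b
  fin_cases α <;> fin_cases β
  · show (Kmat n * (D2H n Γ z * Kmat n)) (k,0) (l,0) = D2H n Γ z (k,0) (l,0)
    rw [Kmul_zero, mulK_zero]
    linarith [trace_block Γ z hz k l]
  · show (Kmat n * (D2H n Γ z * Kmat n)) (k,0) (l,1) = D2H n Γ z (k,0) (l,1)
    rw [Kmul_zero, mulK_one]
    exact (symm_block Γ z hz k l).symm
  · show (Kmat n * (D2H n Γ z * Kmat n)) (k,1) (l,0) = D2H n Γ z (k,1) (l,0)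
    rw [Kmul_one, mulK_zero, neg_neg]
    exact symm_block Γ z hz k l
  · show (Kmat n * (D2H n Γ z * Kmat n)) (k,1) (l,1) = D2H n Γ z (k,1) (l,1)
    rw [Kmul_one, mulK_one]
    linarith [trace_block Γ z hz k l]

lemma K_comm_Minv (Γ : Fin n → ℝ) (hΓ : ∀ i, Γ i ≠ 0) :
    Kmat n * (Mmat n Γ)⁻¹ = (Mmat n Γ)⁻¹ * Kmat n := by
  have h : (Mmat n Γ)⁻¹ = Matrix.diagonal (fun a : Idx n => (Γ a.1)⁻¹) := by
    refine Matrix.inv_eq_right_inv ?_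
    rw [Mmat, Matrix.diagonal_mul_diagonal, ← Matrix.diagonal_one]
    have he : (fun a : Idx n => Γ a.1 * (Γ a.1)⁻¹) = fun _ => (1:ℝ) :=
      funext fun a => mul_inv_cancel₀ (hΓ a.1)
    rw [he]
  rw [h]
  exact K_comm_diag fun i => (Γ i)⁻¹

end CPE

/-- The characteristic polynomials of `D²H(z)` and `M⁻¹D²H(z)` are even:
`q(λ) = q(-λ)` for all `λ`. -/
theorem charpolys_even (n : ℕ) (hn : 2 ≤ n) (Γ : Fin n → ℝ)
    (hΓ : ∀ i, Γ i ≠ 0) (z : Idx n → ℝ) (hz : Distinct n z) :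
    (∀ x : ℝ, ((D2H n Γ z).charpoly).eval x = ((D2H n Γ z).charpoly).eval (-x)) ∧
    (∀ x : ℝ, (((Mmat n Γ)⁻¹ * D2H n Γ z).charpoly).eval x
      = (((Mmat n Γ)⁻¹ * D2H n Γ z).charpoly).eval (-x)) := by
  have hcard : Even (Fintype.card (Idx n)) := by
    rw [Fintype.card_prod, Fintype.card_fin, Fintype.card_fin]
    exact ⟨n, by ring⟩
  have hKAK := CPE.KAK Γ z hz
  constructor
  · intro x
    exact CPE.even_eval hcard (Kmat n) _ CPE.KK hKAK x
  · intro x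
    refine CPE.even_eval hcard (Kmat n) _ CPE.KK ?_ x
    have hc := CPE.K_comm_Minv (n := n) Γ hΓ
    have hassoc : Kmat n * ((Mmat n Γ)⁻¹ * D2H n Γ z) * Kmat n
        = (Mmat n Γ)⁻¹ * (Kmat n * D2H n Γ z * Kmat n) := by
      rw [← mul_assoc, hc, mul_assoc, mul_assoc, mul_assoc]
    rw [hassoc, hKAK]
end
end

section
/- Let z ∈ ℝ^{2n} be any configuration of n point vortices with distinct positions. A vector v is an eigenvector of M⁻¹D²H(z) with eigenvalue μ if and only if Kv is an eigenvector of M⁻¹D²H(z) with eigenvalue −μ. The same equivalence holds for the matrix D²H(z) in place of M⁻¹D²H(z). -/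
noncomputable section

open Finset Polynomial

section Helpers

/-- coordinate difference as a continuous linear map -/
def cdL (n : ℕ) (i j : Fin n) (c : Fin 2) : (Idx n → ℝ) →L[ℝ] ℝ :=
  (ContinuousLinearMap.proj (R := ℝ) (φ := fun _ : Idx n => ℝ) (i, c)) -
    (ContinuousLinearMap.proj (R := ℝ) (φ := fun _ : Idx n => ℝ) (j, c))

lemma cdL_apply (n : ℕ) (i j : Fin n) (c : Fin 2) (w : Idx n → ℝ) :
    cdL n i j c w = w (i, c) - w (j, c) := rfl

def qf (n : ℕ) (i j : Fin n) (w : Idx n → ℝ) : ℝ :=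
  (w (i, 0) - w (j, 0)) ^ 2 + (w (i, 1) - w (j, 1)) ^ 2

def DqL (n : ℕ) (i j : Fin n) (w : Idx n → ℝ) : (Idx n → ℝ) →L[ℝ] ℝ :=
  (2 * (w (i,0) - w (j,0))) • cdL n i j 0 + (2 * (w (i,1) - w (j,1))) • cdL n i j 1

lemma hasFDerivAt_qf (n : ℕ) (i j : Fin n) (w : Idx n → ℝ) :
    HasFDerivAt (qf n i j) (DqL n i j w) w := by
  have h0 : HasFDerivAt (fun w : Idx n → ℝ => (cdL n i j 0 w) ^ 2)
      ((2 * cdL n i j 0 w) • cdL n i j 0) w := by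
    simpa [pow_two, two_mul, add_smul, mul_smul] using ((cdL n i j 0).hasFDerivAt.fun_mul (cdL n i j 0).hasFDerivAt)
  have h1 : HasFDerivAt (fun w : Idx n → ℝ => (cdL n i j 1 w) ^ 2)
      ((2 * cdL n i j 1 w) • cdL n i j 1) w := by
    simpa [pow_two, two_mul, add_smul, mul_smul] using ((cdL n i j 1).hasFDerivAt.fun_mul (cdL n i j 1).hasFDerivAt)
  unfold qf
  simpa [qf, DqL, cdL_apply] using h0.fun_add h1

lemma vortexH_eq (n : ℕ) (Γ : Fin n → ℝ) :
    vortexH n Γ = fun w => -∑ i : Fin n, ∑ j ∈ Finset.Ioi i,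
      Γ i * Γ j * (Real.log (qf n i j w) / 2) := by
  funext w
  unfold vortexH qf
  congr 1
  refine Finset.sum_congr rfl fun i _ => Finset.sum_congr rfl fun j _ => ?_
  rw [Real.log_sqrt (by positivity)]

def LH (n : ℕ) (Γ : Fin n → ℝ) (w : Idx n → ℝ) : (Idx n → ℝ) →L[ℝ] ℝ :=
  -∑ i : Fin n, ∑ j ∈ Finset.Ioi i,
    (Γ i * Γ j * (2 : ℝ)⁻¹ * (qf n i j w)⁻¹) • DqL n i j w

lemma hasFDerivAt_H (n : ℕ) (Γ : Fin n → ℝ) (w : Idx n → ℝ)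
    (hw : ∀ i j : Fin n, i < j → qf n i j w ≠ 0) :
    HasFDerivAt (vortexH n Γ) (LH n Γ w) w := by
  rw [vortexH_eq]
  refine HasFDerivAt.neg ?_
  refine HasFDerivAt.fun_sum fun i _ => HasFDerivAt.fun_sum fun j hj => ?_
  have hq := hasFDerivAt_qf n i j w
  have hlog := hq.log (hw i j (Finset.mem_Ioi.mp hj))
  have : HasFDerivAt (fun y => Γ i * Γ j * Real.log (qf n i j y) * 2⁻¹)
      ((2:ℝ)⁻¹ • (Γ i * Γ j) • (qf n i j w)⁻¹ • DqL n i j w) w :=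
    (hlog.const_mul (Γ i * Γ j)).mul_const (2:ℝ)⁻¹
  refine (this.congr_fderiv ?_).congr_of_eventuallyEq (Filter.Eventually.of_forall fun v => ?_)
  · rw [smul_smul, smul_smul]
    congr 1
    ring
  · ring

def sg (n : ℕ) (i j k : Fin n) : ℝ :=
  (if i = k then (1:ℝ) else 0) - (if j = k then (1:ℝ) else 0)

lemma cdL_single (n : ℕ) (i j : Fin n) (e : Fin 2) (k : Fin n) (c : Fin 2) :
    cdL n i j e (Pi.single (k, c) (1:ℝ)) = if e = c then sg n i j k else 0 := by
  rw [cdL_apply]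
  simp only [Pi.single_apply, Prod.mk.injEq, sg]
  by_cases he : e = c <;> by_cases hik : i = k <;> by_cases hjk : j = k <;>
    simp [he, hik, hjk]

lemma DqL_single (n : ℕ) (i j : Fin n) (w : Idx n → ℝ) (k : Fin n) (c : Fin 2) :
    DqL n i j w (Pi.single (k, c) (1:ℝ)) = 2 * (w (i,c) - w (j,c)) * sg n i j k := by
  have h0 := cdL_single n i j 0 k c
  have h1 := cdL_single n i j 1 k c
  fin_cases c <;>
    simp_all [DqL]

def Gf (n : ℕ) (Γ : Fin n → ℝ) (k : Fin n) (c : Fin 2) : (Idx n → ℝ) → ℝ := fun w =>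
  -∑ i : Fin n, ∑ j ∈ Finset.Ioi i,
    (Γ i * Γ j * sg n i j k) * ((qf n i j w)⁻¹ * (w (i,c) - w (j,c)))

lemma LH_single (n : ℕ) (Γ : Fin n → ℝ) (w : Idx n → ℝ) (k : Fin n) (c : Fin 2) :
    LH n Γ w (Pi.single (k, c) (1:ℝ)) = Gf n Γ k c w := by
  unfold LH Gf
  rw [ContinuousLinearMap.neg_apply]
  congr 1
  rw [ContinuousLinearMap.sum_apply]
  refine Finset.sum_congr rfl fun i _ => ?_
  rw [ContinuousLinearMap.sum_apply]
  refine Finset.sum_congr rfl fun j _ => ?_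
  rw [ContinuousLinearMap.smul_apply, DqL_single]
  simp only [smul_eq_mul]
  ring

def Gder (n : ℕ) (Γ : Fin n → ℝ) (k : Fin n) (c : Fin 2) (z : Idx n → ℝ) :
    (Idx n → ℝ) →L[ℝ] ℝ :=
  -∑ i : Fin n, ∑ j ∈ Finset.Ioi i,
    (Γ i * Γ j * sg n i j k) • ((qf n i j z)⁻¹ • cdL n i j c +
      (z (i,c) - z (j,c)) • ((-(qf n i j z ^ 2)⁻¹) • DqL n i j z))

lemma hasFDerivAt_Gf (n : ℕ) (Γ : Fin n → ℝ) (k : Fin n) (c : Fin 2) (z : Idx n → ℝ)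
    (hz : ∀ i j : Fin n, i < j → qf n i j z ≠ 0) :
    HasFDerivAt (Gf n Γ k c) (Gder n Γ k c z) z := by
  unfold Gf Gder
  refine HasFDerivAt.neg ?_
  refine HasFDerivAt.fun_sum fun i _ => HasFDerivAt.fun_sum fun j hj => ?_
  have hq := hasFDerivAt_qf n i j z
  have hinv : HasFDerivAt (fun w => (qf n i j w)⁻¹)
      ((-(qf n i j z ^ 2)⁻¹) • DqL n i j z) z :=
    (hasDerivAt_inv (hz i j (Finset.mem_Ioi.mp hj))).comp_hasFDerivAt z hq
  have hmul := hinv.fun_mul (cdL n i j c).hasFDerivAt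
  exact (hmul.const_mul (Γ i * Γ j * sg n i j k))


lemma Gder_single (n : ℕ) (Γ : Fin n → ℝ) (k : Fin n) (c : Fin 2) (z : Idx n → ℝ)
    (l : Fin n) (d : Fin 2) :
    Gder n Γ k c z (Pi.single (l, d) (1:ℝ)) =
      -∑ i : Fin n, ∑ j ∈ Finset.Ioi i,
        (Γ i * Γ j * sg n i j k * sg n i j l) *
          ((if c = d then (qf n i j z)⁻¹ else 0) -
            (qf n i j z ^ 2)⁻¹ * (2 * (z (i,c) - z (j,c)) * (z (i,d) - z (j,d)))) := by
  unfold Gder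
  rw [ContinuousLinearMap.neg_apply]
  congr 1
  rw [ContinuousLinearMap.sum_apply]
  refine Finset.sum_congr rfl fun i _ => ?_
  rw [ContinuousLinearMap.sum_apply]
  refine Finset.sum_congr rfl fun j _ => ?_
  rw [ContinuousLinearMap.smul_apply, ContinuousLinearMap.add_apply,
    ContinuousLinearMap.smul_apply, ContinuousLinearMap.smul_apply,
    ContinuousLinearMap.smul_apply, cdL_single, DqL_single]
  simp only [smul_eq_mul]
  by_cases hcd : c = d <;> simp [hcd] <;> ring

lemma qf_ne_of_distinct {n : ℕ} {z : Idx n → ℝ} (hz : Distinct n z)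
    {i j : Fin n} (hij : i ≠ j) : qf n i j z ≠ 0 := by
  intro h
  unfold qf at h
  have h0 : (z (i,0) - z (j,0)) ^ 2 = 0 ∧ (z (i,1) - z (j,1)) ^ 2 = 0 := by
    constructor <;> nlinarith [sq_nonneg (z (i,0) - z (j,0)), sq_nonneg (z (i,1) - z (j,1))]
  apply hz i j hij
  have e0 : z (i,0) = z (j,0) := by nlinarith [h0.1]
  have e1 : z (i,1) = z (j,1) := by nlinarith [h0.2]
  rw [e0, e1]

lemma eventually_qf {n : ℕ} {z : Idx n → ℝ} (hz : Distinct n z) :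
    ∀ᶠ w in nhds z, ∀ i j : Fin n, i < j → qf n i j w ≠ 0 := by
  refine Filter.eventually_all.2 fun i => Filter.eventually_all.2 fun j => ?_
  by_cases hij : i < j
  · have hc : ContinuousAt (qf n i j) z := (hasFDerivAt_qf n i j z).continuousAt
    exact (hc.eventually_ne (qf_ne_of_distinct hz hij.ne)).mono fun w hw _ => hw
  · exact Filter.Eventually.of_forall fun w h => absurd h hij

lemma D2H_apply {n : ℕ} (Γ : Fin n → ℝ) {z : Idx n → ℝ} (hz : Distinct n z)
    (l k : Fin n) (d c : Fin 2) :
    D2H n Γ z (l, d) (k, c) =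
      -∑ i : Fin n, ∑ j ∈ Finset.Ioi i,
        (Γ i * Γ j * sg n i j k * sg n i j l) *
          ((if c = d then (qf n i j z)⁻¹ else 0) -
            (qf n i j z ^ 2)⁻¹ * (2 * (z (i,c) - z (j,c)) * (z (i,d) - z (j,d)))) := by
  have hzq : ∀ i j : Fin n, i < j → qf n i j z ≠ 0 := fun i j h =>
    qf_ne_of_distinct hz h.ne
  have hev : (fun w => fderiv ℝ (vortexH n Γ) w (Pi.single (k,c) (1:ℝ))) =ᶠ[nhds z]
      Gf n Γ k c :=
    (eventually_qf hz).mono fun w hw => by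
      show fderiv ℝ (vortexH n Γ) w (Pi.single (k,c) (1:ℝ)) = Gf n Γ k c w
      rw [(hasFDerivAt_H n Γ w hw).fderiv, LH_single]
  show fderiv ℝ (fun w => fderiv ℝ (vortexH n Γ) w (Pi.single (k,c) 1)) z
      (Pi.single (l,d) 1) = _
  rw [hev.fderiv_eq, (hasFDerivAt_Gf n Γ k c z hzq).fderiv, Gder_single]

lemma trace_term (a b q C : ℝ) (hq : q = a^2 + b^2) (h0 : q ≠ 0) :
    C * (q⁻¹ - (q^2)⁻¹ * (2*a*a)) + C * (q⁻¹ - (q^2)⁻¹ * (2*b*b)) = 0 := by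
  subst hq
  field_simp
  ring

lemma D2H_symm01 {n : ℕ} (Γ : Fin n → ℝ) {z : Idx n → ℝ} (hz : Distinct n z) (l k : Fin n) :
    D2H n Γ z (l,1) (k,0) = D2H n Γ z (l,0) (k,1) := by
  rw [D2H_apply Γ hz, D2H_apply Γ hz]
  congr 1
  refine Finset.sum_congr rfl fun i _ => Finset.sum_congr rfl fun j _ => ?_
  rw [if_neg (by decide), if_neg (by decide)]
  ring

lemma D2H_trace {n : ℕ} (Γ : Fin n → ℝ) {z : Idx n → ℝ} (hz : Distinct n z) (l k : Fin n) :
    D2H n Γ z (l,0) (k,0) + D2H n Γ z (l,1) (k,1) = 0 := by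
  rw [D2H_apply Γ hz, D2H_apply Γ hz, ← neg_add, neg_eq_zero, ← Finset.sum_add_distrib]
  refine Finset.sum_eq_zero fun i _ => ?_
  rw [← Finset.sum_add_distrib]
  refine Finset.sum_eq_zero fun j hj => ?_
  have hq := qf_ne_of_distinct hz (Finset.mem_Ioi.mp hj).ne
  rw [if_pos rfl, if_pos rfl]
  exact trace_term _ _ _ _ rfl hq

lemma anticomm {n : ℕ} (S : Matrix (Idx n) (Idx n) ℝ)
    (h1 : ∀ l k, S (l,1) (k,0) = S (l,0) (k,1))
    (h2 : ∀ l k, S (l,0) (k,0) + S (l,1) (k,1) = 0) :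
    Kmat n * S = -(S * Kmat n) := by
  ext ⟨l, d⟩ ⟨k, c⟩
  rw [Matrix.mul_apply, Matrix.neg_apply, Matrix.mul_apply]
  rw [Fintype.sum_prod_type, Fintype.sum_prod_type]
  simp only [Kmat, Matrix.of_apply]
  fin_cases d <;> fin_cases c <;>
    simp [Fin.sum_univ_two, Finset.sum_ite_eq, apply_ite (· * S _ _),
      apply_ite (S _ _ * ·), Finset.sum_ite_eq'] <;>
    try linarith [h1 l k, h2 l k]

lemma Kmat_mul_Kmat (n : ℕ) : Kmat n * Kmat n = (-1 : Matrix (Idx n) (Idx n) ℝ) := by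
  ext ⟨l, d⟩ ⟨k, c⟩
  rw [Matrix.mul_apply, Fintype.sum_prod_type]
  simp only [Kmat, Matrix.of_apply]
  fin_cases d <;> fin_cases c <;>
    simp [Fin.sum_univ_two, Finset.sum_ite_eq, Matrix.one_apply, Prod.ext_iff,
      apply_ite (· * (if (l:Fin n) = k then _ else (0:ℝ))), eq_comm] <;>
    split_ifs <;> simp_all

lemma eig_swap {n : ℕ} {S : Matrix (Idx n) (Idx n) ℝ}
    (hS : Kmat n * S = -(S * Kmat n)) {v : Idx n → ℝ} {μ : ℝ}
    (h : S.mulVec v = μ • v) :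
    S.mulVec ((Kmat n).mulVec v) = (-μ) • (Kmat n).mulVec v := by
  rw [Matrix.mulVec_mulVec, show S * Kmat n = -(Kmat n * S) by rw [hS, neg_neg],
    Matrix.neg_mulVec, ← Matrix.mulVec_mulVec, h, Matrix.mulVec_smul, neg_smul]

end Helpers

/-- `v` is an eigenvector of `M⁻¹D²H(z)` (resp. `D²H(z)`) with eigenvalue `μ`
iff `Kv` is an eigenvector with eigenvalue `-μ`. -/
theorem eigenvector_iff_K_eigenvector (n : ℕ) (hn : 2 ≤ n) (Γ : Fin n → ℝ)
    (hΓ : ∀ i, Γ i ≠ 0) (z : Idx n → ℝ) (hz : Distinct n z)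
    (v : Idx n → ℝ) (hv : v ≠ 0) (μ : ℝ) :
    (Kmat n).mulVec v ≠ 0 ∧
    (((Mmat n Γ)⁻¹ * D2H n Γ z).mulVec v = μ • v ↔
      ((Mmat n Γ)⁻¹ * D2H n Γ z).mulVec ((Kmat n).mulVec v)
        = (-μ) • ((Kmat n).mulVec v)) ∧
    ((D2H n Γ z).mulVec v = μ • v ↔
      (D2H n Γ z).mulVec ((Kmat n).mulVec v) = (-μ) • ((Kmat n).mulVec v)) := by
  have hKK : ∀ w : Idx n → ℝ, (Kmat n).mulVec ((Kmat n).mulVec w) = -w := by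
    intro w
    rw [Matrix.mulVec_mulVec, Kmat_mul_Kmat, Matrix.neg_mulVec, Matrix.one_mulVec]
  have key : ∀ S : Matrix (Idx n) (Idx n) ℝ, Kmat n * S = -(S * Kmat n) →
      (S.mulVec v = μ • v ↔
        S.mulVec ((Kmat n).mulVec v) = (-μ) • (Kmat n).mulVec v) := by
    intro S hS
    constructor
    · exact eig_swap hS
    · intro h
      have h2 := eig_swap hS h
      rw [hKK] at h2
      have h3 : -(S.mulVec v) = -(μ • v) := by
        simpa [Matrix.mulVec_neg, neg_smul, smul_neg] using h2
      exact neg_injective h3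
  have hanti : Kmat n * D2H n Γ z = -(D2H n Γ z * Kmat n) :=
    anticomm _ (fun l k => D2H_symm01 Γ hz l k) (fun l k => D2H_trace Γ hz l k)
  have hMinv : (Mmat n Γ)⁻¹ = Matrix.diagonal (fun a : Idx n => (Γ a.1)⁻¹) :=
    Matrix.inv_eq_right_inv (by
      have e : (fun a : Idx n => Γ a.1 * (Γ a.1)⁻¹) = fun _ => (1:ℝ) :=
        funext fun a => mul_inv_cancel₀ (hΓ a.1)
      rw [Mmat, Matrix.diagonal_mul_diagonal, e, Matrix.diagonal_one])
  have hanti2 : Kmat n * ((Mmat n Γ)⁻¹ * D2H n Γ z)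
      = -(((Mmat n Γ)⁻¹ * D2H n Γ z) * Kmat n) := by
    apply anticomm
    · intro l k
      rw [hMinv, Matrix.diagonal_mul, Matrix.diagonal_mul]
      exact congrArg _ (D2H_symm01 Γ hz l k)
    · intro l k
      rw [hMinv, Matrix.diagonal_mul, Matrix.diagonal_mul]
      have ht := D2H_trace Γ hz l k
      have e : (Γ l)⁻¹ * (D2H n Γ z (l,0) (k,0) + D2H n Γ z (l,1) (k,1)) = 0 := by
        rw [ht, mul_zero]
      linarith [e, mul_add ((Γ l)⁻¹) (D2H n Γ z (l,0) (k,0)) (D2H n Γ z (l,1) (k,1))]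
  refine ⟨?_, key _ hanti2, key _ hanti⟩
  intro h0
  apply hv
  have hkv := hKK v
  rw [h0, Matrix.mulVec_zero] at hkv
  simpa using hkv.symm
end
end

section
/- Let z₀ be a relative equilibrium with angular velocity ω and stability matrix B, let V = span{z₀, Kz₀}, and let V^⊥ = {w ∈ ℝ^{2n} : wᵀMv = 0 for all v ∈ V} be the M-orthogonal complement of V. Then V^⊥ has dimension 2n − 2 and is invariant under B. Moreover, if L ≠ 0 then V ∩ V^⊥ = {0}. -/
noncomputable section

open Finset Polynomial

namespace VortexAux

open Real Filter

variable {n : ℕ}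

/-- squared distance between vortices `i` and `j`. -/
def sqd (z : Idx n → ℝ) (i j : Fin n) : ℝ :=
  (z (i,0) - z (j,0))^2 + (z (i,1) - z (j,1))^2

/-- the action of the matrix `K` on vectors. -/
def kv (v : Idx n → ℝ) : Idx n → ℝ := fun a =>
  if a.2 = 0 then v (a.1, 1) else -v (a.1, 0)

lemma sum_idx (g : Idx n → ℝ) : ∑ a : Idx n, g a = ∑ i : Fin n, (g (i,0) + g (i,1)) := by
  rw [Fintype.sum_prod_type]
  simp [Fin.sum_univ_two]

lemma kv_mul (c : Fin n → ℝ) (v : Idx n → ℝ) :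
    kv (fun a => c a.1 * v a) = fun a => c a.1 * kv v a := by
  funext ⟨i, d⟩
  fin_cases d <;> simp [kv]

lemma kv_kv (v : Idx n → ℝ) : kv (kv v) = -v := by
  funext ⟨i, d⟩
  fin_cases d <;> simp [kv]

lemma Kmat_mulVec (v : Idx n → ℝ) : (Kmat n).mulVec v = kv v := by
  funext ⟨i, c⟩
  rw [Matrix.mulVec, dotProduct, Fintype.sum_prod_type]
  simp only [Kmat, Matrix.of_apply, ite_mul, zero_mul]
  rw [Finset.sum_comm]
  simp only [Finset.sum_ite_eq, Finset.mem_univ, if_true]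
  fin_cases c <;> simp [kv, Fin.sum_univ_two]

lemma Mmat_mulVec (Γ : Fin n → ℝ) (v : Idx n → ℝ) :
    (Mmat n Γ).mulVec v = fun a => Γ a.1 * v a := by
  funext a
  simp [Mmat, Matrix.mulVec_diagonal]

lemma Mmat_inv (Γ : Fin n → ℝ) (hΓ : ∀ i, Γ i ≠ 0) :
    (Mmat n Γ)⁻¹ = Matrix.diagonal (fun a : Idx n => (Γ a.1)⁻¹) := by
  apply Matrix.inv_eq_right_inv
  rw [Mmat, Matrix.diagonal_mul_diagonal]
  convert Matrix.diagonal_one with a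
  exact mul_inv_cancel₀ (hΓ a.1)

lemma dot_kv (u v : Idx n → ℝ) :
    ∑ a : Idx n, v a * kv u a = -∑ a : Idx n, kv v a * u a := by
  rw [sum_idx, sum_idx, ← Finset.sum_neg_distrib]
  apply Finset.sum_congr rfl
  intro i _
  simp [kv]

lemma sum_kv_single (g : Idx n → ℝ) (b : Idx n) :
    ∑ a : Idx n, kv (Pi.single b 1) a * g a = -(kv g b) := by
  obtain ⟨j, d⟩ := b
  rw [sum_idx]
  fin_cases d
  · simp only [kv, Pi.single_apply, Prod.mk.injEq]
    rw [Finset.sum_eq_single j]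
    · simp
    · intro x _ hx
      simp [hx]
    · simp
  · simp only [kv, Pi.single_apply, Prod.mk.injEq]
    rw [Finset.sum_eq_single j]
    · simp
    · intro x _ hx
      simp [hx]
    · simp

lemma mem_VperpR_iff (Γ : Fin n → ℝ) (z₀ : Idx n → ℝ) (w : Idx n → ℝ) :
    w ∈ VperpR n Γ z₀ ↔ ((∑ a : Idx n, (Γ a.1 * z₀ a) * w a = 0) ∧
      (∑ a : Idx n, (Γ a.1 * kv z₀ a) * w a = 0)) := by
  rw [VperpR, LinearMap.mem_ker]
  constructor
  · intro h
    refine ⟨?_, ?_⟩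
    · have := congrFun h 0
      simpa [Matrix.mulVecLin_apply, Matrix.mulVec, dotProduct,
        Mmat_mulVec, Kmat_mulVec] using this
    · have := congrFun h 1
      simpa [Matrix.mulVecLin_apply, Matrix.mulVec, dotProduct,
        Mmat_mulVec, Kmat_mulVec] using this
  · rintro ⟨h1, h2⟩
    funext i
    fin_cases i
    · simpa [Matrix.mulVecLin_apply, Matrix.mulVec, dotProduct,
        Mmat_mulVec, Kmat_mulVec] using h1
    · simpa [Matrix.mulVecLin_apply, Matrix.mulVec, dotProduct,
        Mmat_mulVec, Kmat_mulVec] using h2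

lemma eq_sum_single (v : Idx n → ℝ) :
    v = ∑ a : Idx n, v a • (Pi.single a (1:ℝ) : Idx n → ℝ) := by
  funext b
  simp [Pi.single_apply, Finset.sum_apply]

lemma clm_apply_eq_sum (T : (Idx n → ℝ) →L[ℝ] ℝ) (v : Idx n → ℝ) :
    T v = ∑ a : Idx n, v a * T (Pi.single a 1) := by
  conv_lhs => rw [eq_sum_single v]
  rw [map_sum]
  simp [smul_eq_mul]

lemma clm2_apply_eq_sum (T : (Idx n → ℝ) →L[ℝ] ((Idx n → ℝ) →L[ℝ] ℝ))
    (u v : Idx n → ℝ) :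
    T u v = ∑ a : Idx n, u a * T (Pi.single a 1) v := by
  conv_lhs => rw [eq_sum_single u]
  rw [map_sum]
  simp [smul_eq_mul]

lemma sum_mulVec_swap (c : Idx n → ℝ) (A : Matrix (Idx n) (Idx n) ℝ) (w : Idx n → ℝ) :
    ∑ a : Idx n, c a * A.mulVec w a = ∑ b : Idx n, (∑ a : Idx n, c a * A a b) * w b := by
  simp only [Matrix.mulVec, dotProduct, Finset.mul_sum, Finset.sum_mul]
  rw [Finset.sum_comm]
  apply Finset.sum_congr rfl
  intro b _
  apply Finset.sum_congr rfl
  intro a _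
  ring

end VortexAux
namespace VortexAux

section Analysis

variable {n : ℕ}

lemma vortexH_eq (n : ℕ) (Γ : Fin n → ℝ) :
    vortexH n Γ = fun z => -∑ i : Fin n, ∑ j ∈ Finset.Ioi i,
      Γ i * Γ j * (Real.log (sqd z i j) / 2) := by
  funext z
  rw [vortexH]
  congr 1
  refine Finset.sum_congr rfl fun i _ => Finset.sum_congr rfl fun j _ => ?_
  rw [Real.log_sqrt (by positivity)]
  rfl

lemma contDiff_sqd (i j : Fin n) : ContDiff ℝ 2 (fun z : Idx n → ℝ => sqd z i j) := by
  have h : ∀ a : Idx n, ContDiff ℝ 2 (fun z : Idx n → ℝ => z a) := fun a =>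
    (ContinuousLinearMap.proj (R := ℝ) (φ := fun _ : Idx n => ℝ) a).contDiff
  exact (((h (i,0)).sub (h (j,0))).pow 2).add (((h (i,1)).sub (h (j,1))).pow 2)

lemma contDiffAt_vortexH (Γ : Fin n → ℝ) {z : Idx n → ℝ}
    (hz : ∀ i j : Fin n, i ≠ j → sqd z i j ≠ 0) :
    ContDiffAt ℝ 2 (vortexH n Γ) z := by
  rw [vortexH_eq]
  apply ContDiffAt.neg
  apply ContDiffAt.sum
  intro i _
  apply ContDiffAt.sum
  intro j hj
  have hij : i ≠ j := (Finset.mem_Ioi.mp hj).ne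
  exact contDiffAt_const.mul
    (((Real.contDiffAt_log.mpr (hz i j hij)).comp z (contDiff_sqd i j).contDiffAt).div_const 2)

lemma isOpen_good : IsOpen {z : Idx n → ℝ | ∀ i j : Fin n, i ≠ j → sqd z i j ≠ 0} := by
  have hset : {z : Idx n → ℝ | ∀ i j : Fin n, i ≠ j → sqd z i j ≠ 0}
      = ⋂ p : Fin n × Fin n, {z | p.1 ≠ p.2 → sqd z p.1 p.2 ≠ 0} := by
    ext z
    simp only [Set.mem_setOf_eq, Set.mem_iInter, Prod.forall]
  rw [hset]
  apply isOpen_iInter_of_finite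
  rintro ⟨i, j⟩
  rcases eq_or_ne i j with h | h
  · subst h
    have huniv : {z : Idx n → ℝ | i ≠ i → sqd z i i ≠ 0} = Set.univ := by
      ext z; simp
    rw [huniv]
    exact isOpen_univ
  · have : {z : Idx n → ℝ | i ≠ j → sqd z i j ≠ 0} = (fun z => sqd z i j) ⁻¹' {(0:ℝ)}ᶜ := by
      ext z
      simp [h]
    rw [this]
    exact (isOpen_compl_singleton).preimage (contDiff_sqd i j).continuous

lemma distinct_iff (z : Idx n → ℝ) :
    Distinct n z ↔ ∀ i j : Fin n, i ≠ j → sqd z i j ≠ 0 := by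
  constructor
  · intro h i j hij hs
    apply h i j hij
    rw [sqd] at hs
    have h1 : z (i,0) - z (j,0) = 0 := by nlinarith [sq_nonneg (z (i,0) - z (j,0)), sq_nonneg (z (i,1) - z (j,1))]
    have h2 : z (i,1) - z (j,1) = 0 := by nlinarith [sq_nonneg (z (i,0) - z (j,0)), sq_nonneg (z (i,1) - z (j,1))]
    rw [Prod.mk.injEq]
    constructor <;> linarith
  · intro h i j hij heq
    apply h i j hij
    rw [sqd, show z (i,0) = z (j,0) from congrArg Prod.fst heq,
      show z (i,1) = z (j,1) from congrArg Prod.snd heq]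
    ring

lemma sqd_smul (t : ℝ) (z : Idx n → ℝ) (i j : Fin n) :
    sqd (t • z) i j = t^2 * sqd z i j := by
  simp only [sqd, Pi.smul_apply, smul_eq_mul]
  ring

lemma sqd_rot (θ : ℝ) (z : Idx n → ℝ) (i j : Fin n) :
    sqd (rotConf n θ z) i j = sqd z i j := by
  have h := Real.sin_sq_add_cos_sq θ
  simp only [sqd, rotConf]
  norm_num
  linear_combination ((z (i,0) - z (j,0))^2 + (z (i,1) - z (j,1))^2) * h

lemma vortexH_smul (Γ : Fin n → ℝ) {t : ℝ} (ht : t ≠ 0) {z : Idx n → ℝ}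
    (hz : ∀ i j : Fin n, i ≠ j → sqd z i j ≠ 0) :
    vortexH n Γ (t • z) = vortexH n Γ z - vortexL n Γ * (Real.log (t^2) / 2) := by
  have key : ∑ i : Fin n, ∑ j ∈ Finset.Ioi i, Γ i * Γ j * (Real.log (sqd (t • z) i j) / 2)
      = (∑ i : Fin n, ∑ j ∈ Finset.Ioi i, Γ i * Γ j * (Real.log (sqd z i j) / 2))
        + (∑ i : Fin n, ∑ j ∈ Finset.Ioi i, Γ i * Γ j) * (Real.log (t^2) / 2) := by
    rw [Finset.sum_mul, ← Finset.sum_add_distrib]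
    refine Finset.sum_congr rfl fun i _ => ?_
    rw [Finset.sum_mul, ← Finset.sum_add_distrib]
    refine Finset.sum_congr rfl fun j hj => ?_
    have hij : i ≠ j := (Finset.mem_Ioi.mp hj).ne
    rw [sqd_smul, Real.log_mul (pow_ne_zero 2 ht) (hz i j hij)]
    ring
  simp only [vortexH_eq, vortexL]
  rw [key]
  ring

lemma vortexH_rot (Γ : Fin n → ℝ) (θ : ℝ) (z : Idx n → ℝ) :
    vortexH n Γ (rotConf n θ z) = vortexH n Γ z := by
  simp only [vortexH_eq, sqd_rot]

lemma grad_repr (Γ : Fin n → ℝ) (z₀ v : Idx n → ℝ) :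
    fderiv ℝ (vortexH n Γ) z₀ v = ∑ a : Idx n, v a * gradH n Γ z₀ a := by
  simpa [gradH] using clm_apply_eq_sum (fderiv ℝ (vortexH n Γ) z₀) v

lemma euler (Γ : Fin n → ℝ) {z₀ : Idx n → ℝ}
    (hz : ∀ i j : Fin n, i ≠ j → sqd z₀ i j ≠ 0) :
    fderiv ℝ (vortexH n Γ) z₀ z₀ = -vortexL n Γ := by
  set f := vortexH n Γ with hf
  have hdiff : DifferentiableAt ℝ f z₀ := (contDiffAt_vortexH Γ hz).differentiableAt (by norm_num)
  have hc : HasDerivAt (fun t : ℝ => t • z₀) z₀ 1 := by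
    simpa using (hasDerivAt_id (1:ℝ)).smul_const z₀
  have h1 : HasDerivAt (fun t : ℝ => f (t • z₀)) (fderiv ℝ f z₀ z₀) 1 := by
    have hb : HasFDerivAt f (fderiv ℝ f z₀) ((fun t : ℝ => t • z₀) 1) := by
      simpa using hdiff.hasFDerivAt
    exact hb.comp_hasDerivAt 1 hc
  have h2 : (fun t : ℝ => f (t • z₀)) =ᶠ[nhds 1]
      fun t => f z₀ - vortexL n Γ * (Real.log (t^2) / 2) := by
    filter_upwards [eventually_ne_nhds one_ne_zero] with t ht
    exact vortexH_smul Γ ht hz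
  have h3 : HasDerivAt (fun t : ℝ => f z₀ - vortexL n Γ * (Real.log (t^2) / 2))
      (-vortexL n Γ) 1 := by
    have hp : HasDerivAt (fun t : ℝ => t^2) 2 1 := by simpa using hasDerivAt_pow 2 (1:ℝ)
    have hl : HasDerivAt (fun t : ℝ => Real.log (t^2)) (1*2) 1 := by
      have hlog : HasDerivAt Real.log 1 1 := by
        simpa using Real.hasDerivAt_log (one_ne_zero)
      exact HasDerivAt.comp_of_eq 1 hlog hp (by norm_num)
    have := ((hl.div_const 2).const_mul (vortexL n Γ)).const_sub (f z₀)
    exact this.congr_deriv (by ring)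
  exact h1.unique (h3.congr_of_eventuallyEq h2)

end Analysis

end VortexAux
namespace VortexAux

section SecondOrder

variable {n : ℕ}

lemma rotConf_eq (θ : ℝ) (z : Idx n → ℝ) :
    rotConf n θ z = Real.cos θ • z + Real.sin θ • kv z := by
  funext ⟨i, d⟩
  fin_cases d <;> simp [rotConf, kv] <;> ring

lemma rot_rot_neg (θ : ℝ) (v : Idx n → ℝ) : rotConf n θ (rotConf n (-θ) v) = v := by
  have h := Real.sin_sq_add_cos_sq θ
  rw [rotConf_eq, rotConf_eq]
  funext ⟨i, d⟩
  fin_cases d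
  · simp [kv, Real.cos_neg, Real.sin_neg]
    linear_combination v (i, 0) * h
  · simp [kv, Real.cos_neg, Real.sin_neg]
    linear_combination v (i, 1) * h

/-- `kv` as a continuous linear map. -/
def Kop (n : ℕ) : (Idx n → ℝ) →L[ℝ] (Idx n → ℝ) :=
  LinearMap.toContinuousLinearMap
    { toFun := kv
      map_add' := by
        intro x y; funext ⟨i, d⟩; fin_cases d <;> simp [kv] <;> ring
      map_smul' := by
        intro c x; funext ⟨i, d⟩; fin_cases d <;> simp [kv] }

lemma Kop_apply (v : Idx n → ℝ) : Kop n v = kv v := rfl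

lemma D2H_apply (Γ : Fin n → ℝ) {z₀ : Idx n → ℝ}
    (hz : ∀ i j : Fin n, i ≠ j → sqd z₀ i j ≠ 0) (a b : Idx n) :
    D2H n Γ z₀ a b
      = fderiv ℝ (fderiv ℝ (vortexH n Γ)) z₀ (Pi.single a 1) (Pi.single b 1) := by
  set f := vortexH n Γ with hf
  have hdf : DifferentiableAt ℝ (fderiv ℝ f) z₀ :=
    ((contDiffAt_vortexH Γ hz).fderiv_right (m := 1) (by norm_num)).differentiableAt
      (by norm_num)
  have hgb : HasFDerivAt (fun w => fderiv ℝ f w (Pi.single b 1))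
      ((ContinuousLinearMap.apply ℝ ℝ (Pi.single b (1:ℝ))).comp
        (fderiv ℝ (fderiv ℝ f) z₀)) z₀ := by
    exact (ContinuousLinearMap.apply ℝ ℝ (Pi.single b (1:ℝ))).hasFDerivAt.comp z₀
      hdf.hasFDerivAt
  rw [D2H, Matrix.of_apply, hgb.fderiv]
  rfl

lemma snd_smul (Γ : Fin n → ℝ) {z₀ : Idx n → ℝ}
    (hz : ∀ i j : Fin n, i ≠ j → sqd z₀ i j ≠ 0) (v : Idx n → ℝ) :
    fderiv ℝ (fderiv ℝ (vortexH n Γ)) z₀ z₀ v = -(fderiv ℝ (vortexH n Γ) z₀ v) := by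
  set f := vortexH n Γ with hf
  have hdf : DifferentiableAt ℝ (fderiv ℝ f) z₀ :=
    ((contDiffAt_vortexH Γ hz).fderiv_right (m := 1) (by norm_num)).differentiableAt
      (by norm_num)
  have hgb : HasFDerivAt (fun w => fderiv ℝ f w v)
      ((ContinuousLinearMap.apply ℝ ℝ v).comp (fderiv ℝ (fderiv ℝ f) z₀)) z₀ :=
    (ContinuousLinearMap.apply ℝ ℝ v).hasFDerivAt.comp z₀ hdf.hasFDerivAt
  have hc : HasDerivAt (fun t : ℝ => t • z₀) z₀ 1 := by
    simpa using (hasDerivAt_id (1:ℝ)).smul_const z₀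
  have h1 : HasDerivAt (fun t : ℝ => fderiv ℝ f (t • z₀) v)
      (fderiv ℝ (fderiv ℝ f) z₀ z₀ v) 1 := by
    have hb : HasFDerivAt (fun w => fderiv ℝ f w v)
        ((ContinuousLinearMap.apply ℝ ℝ v).comp (fderiv ℝ (fderiv ℝ f) z₀))
        ((fun t : ℝ => t • z₀) 1) := by
      simpa using hgb
    exact hb.comp_hasDerivAt 1 hc
  have h2 : (fun t : ℝ => fderiv ℝ f (t • z₀) v) =ᶠ[nhds 1]
      fun t => t⁻¹ * fderiv ℝ f z₀ v := by
    filter_upwards [eventually_ne_nhds one_ne_zero] with t ht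
    have hzt : ∀ i j : Fin n, i ≠ j → sqd (t • z₀) i j ≠ 0 := fun i j hij => by
      rw [sqd_smul]; exact mul_ne_zero (pow_ne_zero 2 ht) (hz i j hij)
    have hdt : DifferentiableAt ℝ f (t • z₀) :=
      (contDiffAt_vortexH Γ hzt).differentiableAt (by norm_num)
    set S : (Idx n → ℝ) →L[ℝ] (Idx n → ℝ) := t • ContinuousLinearMap.id ℝ (Idx n → ℝ)
      with hSdef
    have hA : HasFDerivAt (fun z : Idx n → ℝ => f (t • z))
        ((fderiv ℝ f (t • z₀)).comp S) z₀ := by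
      have h0 : HasFDerivAt (fun z : Idx n → ℝ => t • z) S z₀ := by
        have hfun : (fun z : Idx n → ℝ => t • z) = ⇑S := by
          funext z; simp [hSdef]
        rw [hfun]; exact S.hasFDerivAt
      exact hdt.hasFDerivAt.comp z₀ h0
    have hB : HasFDerivAt (fun z : Idx n → ℝ => f (t • z)) (fderiv ℝ f z₀) z₀ := by
      have hEE : (fun z : Idx n → ℝ => f (t • z)) =ᶠ[nhds z₀]
          fun z => f z - vortexL n Γ * (Real.log (t^2) / 2) := by
        filter_upwards [isOpen_good.mem_nhds hz] with z hzz using vortexH_smul Γ ht hzz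
      exact (((contDiffAt_vortexH Γ hz).differentiableAt
        (by norm_num)).hasFDerivAt.sub_const _).congr_of_eventuallyEq hEE
    have hu := hA.unique hB
    have happ := congrArg (fun T : (Idx n → ℝ) →L[ℝ] ℝ => T v) hu
    simp only [ContinuousLinearMap.comp_apply, hSdef, ContinuousLinearMap.smul_apply,
      ContinuousLinearMap.id_apply, map_smul, smul_eq_mul] at happ
    rw [← happ]
    field_simp
  have h3 : HasDerivAt (fun t : ℝ => t⁻¹ * fderiv ℝ f z₀ v)
      (-(fderiv ℝ f z₀ v)) 1 := by
    have := (hasDerivAt_inv one_ne_zero).mul_const (fderiv ℝ f z₀ v)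
    exact this.congr_deriv (by norm_num)
  exact h1.unique (h3.congr_of_eventuallyEq h2)

lemma snd_rot (Γ : Fin n → ℝ) {z₀ : Idx n → ℝ}
    (hz : ∀ i j : Fin n, i ≠ j → sqd z₀ i j ≠ 0) (v : Idx n → ℝ) :
    fderiv ℝ (fderiv ℝ (vortexH n Γ)) z₀ (kv z₀) v
      = -(fderiv ℝ (vortexH n Γ) z₀ (kv v)) := by
  set f := vortexH n Γ with hf
  have hdf : DifferentiableAt ℝ (fderiv ℝ f) z₀ :=
    ((contDiffAt_vortexH Γ hz).fderiv_right (m := 1) (by norm_num)).differentiableAt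
      (by norm_num)
  have hgb : HasFDerivAt (fun w => fderiv ℝ f w v)
      ((ContinuousLinearMap.apply ℝ ℝ v).comp (fderiv ℝ (fderiv ℝ f) z₀)) z₀ :=
    (ContinuousLinearMap.apply ℝ ℝ v).hasFDerivAt.comp z₀ hdf.hasFDerivAt
  have hrotz : ∀ θ : ℝ, ∀ i j : Fin n, i ≠ j → sqd (rotConf n θ z₀) i j ≠ 0 :=
    fun θ i j hij => by rw [sqd_rot]; exact hz i j hij
  have hcurve : HasDerivAt (fun θ : ℝ => rotConf n θ z₀) (kv z₀) 0 := by
    have hfun : (fun θ : ℝ => rotConf n θ z₀)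
        = fun θ => Real.cos θ • z₀ + Real.sin θ • kv z₀ := by
      funext θ; exact rotConf_eq θ z₀
    rw [hfun]
    have h1 := (Real.hasDerivAt_cos 0).smul_const z₀
    have h2 := (Real.hasDerivAt_sin 0).smul_const (kv z₀)
    exact (h1.add h2).congr_deriv (by simp)
  have h1 : HasDerivAt (fun θ : ℝ => fderiv ℝ f (rotConf n θ z₀) v)
      (fderiv ℝ (fderiv ℝ f) z₀ (kv z₀) v) 0 := by
    have hbase : (fun θ : ℝ => rotConf n θ z₀) 0 = z₀ := by
      show rotConf n 0 z₀ = z₀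
      rw [rotConf_eq]; simp
    have hb : HasFDerivAt (fun w => fderiv ℝ f w v)
        ((ContinuousLinearMap.apply ℝ ℝ v).comp (fderiv ℝ (fderiv ℝ f) z₀))
        ((fun θ : ℝ => rotConf n θ z₀) 0) := by
      rw [hbase]; exact hgb
    exact hb.comp_hasDerivAt 0 hcurve
  have h2 : ∀ θ : ℝ, fderiv ℝ f (rotConf n θ z₀) v
      = Real.cos θ * fderiv ℝ f z₀ v - Real.sin θ * fderiv ℝ f z₀ (kv v) := by
    intro θ
    set R : (Idx n → ℝ) →L[ℝ] (Idx n → ℝ) :=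
      Real.cos θ • ContinuousLinearMap.id ℝ (Idx n → ℝ) + Real.sin θ • Kop n with hRdef
    have hR : ∀ z : Idx n → ℝ, R z = rotConf n θ z := fun z => by
      rw [rotConf_eq]
      simp [hRdef, Kop_apply]
    have hdθ : DifferentiableAt ℝ f (rotConf n θ z₀) :=
      (contDiffAt_vortexH Γ (hrotz θ)).differentiableAt (by norm_num)
    have hA : HasFDerivAt (fun z : Idx n → ℝ => f (rotConf n θ z))
        ((fderiv ℝ f (rotConf n θ z₀)).comp R) z₀ := by
      have h0 : HasFDerivAt (fun z : Idx n → ℝ => rotConf n θ z) R z₀ := by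
        have hfun : (fun z : Idx n → ℝ => rotConf n θ z) = ⇑R := by
          funext z; rw [hR]
        rw [hfun]; exact R.hasFDerivAt
      have := hdθ.hasFDerivAt.comp z₀ h0
      exact this
    have hglob : (fun z : Idx n → ℝ => f (rotConf n θ z)) = f := by
      funext z; exact vortexH_rot Γ θ z
    rw [hglob] at hA
    have hu := hA.unique ((contDiffAt_vortexH Γ hz).differentiableAt
      (by norm_num)).hasFDerivAt
    have happ := congrArg (fun T : (Idx n → ℝ) →L[ℝ] ℝ => T (rotConf n (-θ) v)) hu
    simp only [ContinuousLinearMap.comp_apply] at happ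
    rw [hR, rot_rot_neg] at happ
    rw [happ, rotConf_eq]
    rw [map_add, map_smul, map_smul]
    simp [Real.cos_neg, Real.sin_neg, smul_eq_mul]
    ring
  have h3 : HasDerivAt
      (fun θ : ℝ => Real.cos θ * fderiv ℝ f z₀ v - Real.sin θ * fderiv ℝ f z₀ (kv v))
      (-(fderiv ℝ f z₀ (kv v))) 0 := by
    have := ((Real.hasDerivAt_cos 0).mul_const (fderiv ℝ f z₀ v)).sub
      ((Real.hasDerivAt_sin 0).mul_const (fderiv ℝ f z₀ (kv v)))
    exact this.congr_deriv (by simp)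
  have hfun2 : (fun θ : ℝ => fderiv ℝ f (rotConf n θ z₀) v)
      = fun θ => Real.cos θ * fderiv ℝ f z₀ v - Real.sin θ * fderiv ℝ f z₀ (kv v) :=
    funext h2
  rw [hfun2] at h1
  exact h1.unique h3

lemma D2H_row_z (Γ : Fin n → ℝ) {z₀ : Idx n → ℝ}
    (hz : ∀ i j : Fin n, i ≠ j → sqd z₀ i j ≠ 0) (b : Idx n) :
    ∑ a : Idx n, z₀ a * D2H n Γ z₀ a b = -(gradH n Γ z₀ b) := by
  have hsum : ∑ a : Idx n, z₀ a * D2H n Γ z₀ a b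
      = fderiv ℝ (fderiv ℝ (vortexH n Γ)) z₀ z₀ (Pi.single b 1) := by
    rw [clm2_apply_eq_sum]
    refine Finset.sum_congr rfl fun a _ => ?_
    rw [D2H_apply Γ hz]
  rw [hsum, snd_smul Γ hz]
  rfl

lemma D2H_row_kz (Γ : Fin n → ℝ) {z₀ : Idx n → ℝ}
    (hz : ∀ i j : Fin n, i ≠ j → sqd z₀ i j ≠ 0) (b : Idx n) :
    ∑ a : Idx n, kv z₀ a * D2H n Γ z₀ a b = kv (gradH n Γ z₀) b := by
  have hsum : ∑ a : Idx n, kv z₀ a * D2H n Γ z₀ a b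
      = fderiv ℝ (fderiv ℝ (vortexH n Γ)) z₀ (kv z₀) (Pi.single b 1) := by
    rw [clm2_apply_eq_sum]
    refine Finset.sum_congr rfl fun a _ => ?_
    rw [D2H_apply Γ hz]
  rw [hsum, snd_rot Γ hz, grad_repr, sum_kv_single]
  rw [neg_neg]

end SecondOrder

end VortexAux

/-- the `M`-orthogonal complement `V^⊥` of `V = span{z₀, Kz₀}` has dimension
`2n - 2`, is invariant under the stability matrix `B`, and if `L ≠ 0` then `V ∩ V^⊥ = {0}`. -/
theorem Vperp_dim_invariant (n : ℕ) (hn : 2 ≤ n) (Γ : Fin n → ℝ)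
    (hΓ : ∀ i, Γ i ≠ 0) (z₀ : Idx n → ℝ) (ω : ℝ) (hre : IsRelEq n Γ z₀ ω) :
    ((VperpR n Γ z₀ : Set (Idx n → ℝ))
      = {w | ∀ v ∈ Vspan n z₀, ∑ a : Idx n, w a * (Mmat n Γ).mulVec v a = 0}) ∧
    Module.finrank ℝ (VperpR n Γ z₀) = 2 * n - 2 ∧
    (∀ w ∈ VperpR n Γ z₀, (Bmat n Γ z₀ ω).mulVec w ∈ VperpR n Γ z₀) ∧
    (vortexL n Γ ≠ 0 → Vspan n z₀ ⊓ VperpR n Γ z₀ = ⊥) := by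
  classical
  obtain ⟨hdist, hω, heq⟩ := hre
  have hz : ∀ i j : Fin n, i ≠ j → VortexAux.sqd z₀ i j ≠ 0 :=
    (VortexAux.distinct_iff z₀).mp hdist
  have hGa : ∀ a : Idx n, gradH n Γ z₀ a = -(ω * (Γ a.1 * z₀ a)) := by
    intro a
    have h := congrFun heq a
    rw [Pi.add_apply, Pi.smul_apply, VortexAux.Mmat_mulVec] at h
    simp only [smul_eq_mul, Pi.zero_apply] at h
    linarith
  -- z₀ is nonzero
  have hz0ne : ∃ a : Idx n, z₀ a ≠ 0 := by
    by_contra hcon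
    push_neg at hcon
    have h01 : (⟨0, by omega⟩ : Fin n) ≠ (⟨1, by omega⟩ : Fin n) := by
      simp [Fin.mk.injEq]
    apply hdist _ _ h01
    rw [hcon, hcon, hcon, hcon]
  set T : ℝ := ∑ a : Idx n, z₀ a * z₀ a with hT
  have hTpos : 0 < T := by
    obtain ⟨a, ha⟩ := hz0ne
    exact Finset.sum_pos' (fun b _ => mul_self_nonneg _)
      ⟨a, Finset.mem_univ a, mul_self_pos.mpr ha⟩
  -- Euclidean dot products
  have hzkz : ∑ a : Idx n, z₀ a * VortexAux.kv z₀ a = 0 := by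
    rw [VortexAux.sum_idx]
    apply Finset.sum_eq_zero
    intro i _
    simp [VortexAux.kv]
    ring
  have hkzz : ∑ a : Idx n, VortexAux.kv z₀ a * z₀ a = 0 := by
    rw [← hzkz]
    exact Finset.sum_congr rfl fun a _ => mul_comm _ _
  have hkk : ∑ a : Idx n, VortexAux.kv z₀ a * VortexAux.kv z₀ a = T := by
    rw [hT, VortexAux.sum_idx, VortexAux.sum_idx]
    apply Finset.sum_congr rfl
    intro i _
    simp [VortexAux.kv]
    ring
  -- Part 1 : the set description
  have part1 : (VperpR n Γ z₀ : Set (Idx n → ℝ))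
      = {w | ∀ v ∈ Vspan n z₀, ∑ a : Idx n, w a * (Mmat n Γ).mulVec v a = 0} := by
    ext w
    rw [SetLike.mem_coe, VortexAux.mem_VperpR_iff, Set.mem_setOf_eq]
    constructor
    · rintro ⟨h1, h2⟩ v hv
      rw [Vspan, Submodule.mem_span_pair] at hv
      obtain ⟨α, β, rfl⟩ := hv
      have hM : ∀ a : Idx n, (Mmat n Γ).mulVec (α • z₀ + β • (Kmat n).mulVec z₀) a
          = α * (Γ a.1 * z₀ a) + β * (Γ a.1 * VortexAux.kv z₀ a) := by
        intro a
        simp only [VortexAux.Mmat_mulVec, VortexAux.Kmat_mulVec, Pi.add_apply,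
          Pi.smul_apply, smul_eq_mul]
        ring
      calc ∑ a : Idx n, w a * (Mmat n Γ).mulVec (α • z₀ + β • (Kmat n).mulVec z₀) a
          = α * (∑ a : Idx n, (Γ a.1 * z₀ a) * w a)
            + β * (∑ a : Idx n, (Γ a.1 * VortexAux.kv z₀ a) * w a) := by
            rw [Finset.mul_sum, Finset.mul_sum, ← Finset.sum_add_distrib]
            refine Finset.sum_congr rfl fun a _ => ?_
            rw [hM a]
            ring
        _ = 0 := by rw [h1, h2]; ring
    · intro hw
      constructor
      · have h := hw z₀ (Submodule.subset_span (by simp))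
        rw [← h]
        refine Finset.sum_congr rfl fun a _ => ?_
        simp only [VortexAux.Mmat_mulVec]
        ring
      · have h := hw ((Kmat n).mulVec z₀)
          (Submodule.subset_span (by simp [Set.mem_insert_iff]))
        rw [← h]
        refine Finset.sum_congr rfl fun a _ => ?_
        simp only [VortexAux.Mmat_mulVec, VortexAux.Kmat_mulVec]
        ring
  -- Part 2 : dimension
  have hsurj : Function.Surjective (Matrix.mulVecLin (Matrix.of
      ![(Mmat n Γ).mulVec z₀, (Mmat n Γ).mulVec ((Kmat n).mulVec z₀)])) := by
    intro c
    refine ⟨fun a => (c 0 * z₀ a + c 1 * VortexAux.kv z₀ a) / (T * Γ a.1), ?_⟩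
    have hptw : ∀ (r : Idx n → ℝ), ∀ a : Idx n,
        (Γ a.1 * r a) * ((c 0 * z₀ a + c 1 * VortexAux.kv z₀ a) / (T * Γ a.1))
        = (c 0 * (r a * z₀ a) + c 1 * (r a * VortexAux.kv z₀ a)) / T := by
      intro r a
      have h1 := hΓ a.1
      have h2 := hTpos.ne'
      field_simp
    funext i
    fin_cases i
    · show (Matrix.of ![(Mmat n Γ).mulVec z₀,
        (Mmat n Γ).mulVec ((Kmat n).mulVec z₀)]).mulVec _ 0 = c 0
      rw [Matrix.mulVec, dotProduct]
      calc ∑ a : Idx n, Matrix.of ![(Mmat n Γ).mulVec z₀,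
            (Mmat n Γ).mulVec ((Kmat n).mulVec z₀)] 0 a
            * ((c 0 * z₀ a + c 1 * VortexAux.kv z₀ a) / (T * Γ a.1))
          = ∑ a : Idx n, (c 0 * (z₀ a * z₀ a) + c 1 * (z₀ a * VortexAux.kv z₀ a)) / T := by
            refine Finset.sum_congr rfl fun a _ => ?_
            have := hptw z₀ a
            simpa [VortexAux.Mmat_mulVec] using this
        _ = c 0 := by
            rw [← Finset.sum_div, Finset.sum_add_distrib, ← Finset.mul_sum, ← Finset.mul_sum,
              hzkz, ← hT, mul_zero, add_zero]
            exact mul_div_cancel_right₀ (c 0) hTpos.ne'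
    · show (Matrix.of ![(Mmat n Γ).mulVec z₀,
        (Mmat n Γ).mulVec ((Kmat n).mulVec z₀)]).mulVec _ 1 = c 1
      rw [Matrix.mulVec, dotProduct]
      calc ∑ a : Idx n, Matrix.of ![(Mmat n Γ).mulVec z₀,
            (Mmat n Γ).mulVec ((Kmat n).mulVec z₀)] 1 a
            * ((c 0 * z₀ a + c 1 * VortexAux.kv z₀ a) / (T * Γ a.1))
          = ∑ a : Idx n, (c 0 * (VortexAux.kv z₀ a * z₀ a)
              + c 1 * (VortexAux.kv z₀ a * VortexAux.kv z₀ a)) / T := by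
            refine Finset.sum_congr rfl fun a _ => ?_
            have := hptw (VortexAux.kv z₀) a
            simpa [VortexAux.Mmat_mulVec, VortexAux.Kmat_mulVec] using this
        _ = c 1 := by
            rw [← Finset.sum_div, Finset.sum_add_distrib, ← Finset.mul_sum, ← Finset.mul_sum,
              hkzz, hkk, mul_zero, zero_add]
            exact mul_div_cancel_right₀ (c 1) hTpos.ne'
  have part2 : Module.finrank ℝ (VperpR n Γ z₀) = 2 * n - 2 := by
    have hrn := LinearMap.finrank_range_add_finrank_ker (Matrix.mulVecLin (Matrix.of
      ![(Mmat n Γ).mulVec z₀, (Mmat n Γ).mulVec ((Kmat n).mulVec z₀)]))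
    rw [LinearMap.range_eq_top.mpr hsurj, finrank_top,
      Module.finrank_fintype_fun_eq_card, Module.finrank_fintype_fun_eq_card] at hrn
    simp only [Fintype.card_fin, Fintype.card_prod] at hrn
    rw [VperpR]
    omega
  -- Part 3 : invariance under B
  have part3 : ∀ w ∈ VperpR n Γ z₀, (Bmat n Γ z₀ ω).mulVec w ∈ VperpR n Γ z₀ := by
    intro w hw
    rw [VortexAux.mem_VperpR_iff] at hw ⊢
    obtain ⟨hw1, hw2⟩ := hw
    have hinner : ((Mmat n Γ)⁻¹ * D2H n Γ z₀
          + ω • (1 : Matrix (Idx n) (Idx n) ℝ)).mulVec w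
        = fun a => (Γ a.1)⁻¹ * ((D2H n Γ z₀).mulVec w a) + ω * w a := by
      have hsplit : ((Mmat n Γ)⁻¹ * D2H n Γ z₀).mulVec w
          = (Mmat n Γ)⁻¹.mulVec ((D2H n Γ z₀).mulVec w) :=
        (Matrix.mulVec_mulVec w _ _).symm
      rw [Matrix.add_mulVec, hsplit, VortexAux.Mmat_inv Γ hΓ,
        Matrix.smul_mulVec, Matrix.one_mulVec]
      funext a
      simp only [Pi.add_apply, Matrix.mulVec_diagonal, Pi.smul_apply, smul_eq_mul]
    have hBw : (Bmat n Γ z₀ ω).mulVec w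
        = VortexAux.kv (fun a => (Γ a.1)⁻¹ * ((D2H n Γ z₀).mulVec w a) + ω * w a) := by
      have hsplit2 : (Kmat n * ((Mmat n Γ)⁻¹ * D2H n Γ z₀
          + ω • (1 : Matrix (Idx n) (Idx n) ℝ))).mulVec w
          = (Kmat n).mulVec (((Mmat n Γ)⁻¹ * D2H n Γ z₀
          + ω • (1 : Matrix (Idx n) (Idx n) ℝ)).mulVec w) :=
        (Matrix.mulVec_mulVec w _ _).symm
      rw [Bmat, hsplit2, hinner, VortexAux.Kmat_mulVec]
    rw [hBw]
    set u : Idx n → ℝ := fun a => (Γ a.1)⁻¹ * ((D2H n Γ z₀).mulVec w a) + ω * w a with hu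
    have hrow_z : ∀ b : Idx n, ∑ a : Idx n, z₀ a * D2H n Γ z₀ a b
        = ω * (Γ b.1 * z₀ b) := by
      intro b
      rw [VortexAux.D2H_row_z Γ hz, hGa]
      ring
    have hrow_kz : ∀ b : Idx n, ∑ a : Idx n, VortexAux.kv z₀ a * D2H n Γ z₀ a b
        = -(ω * (Γ b.1 * VortexAux.kv z₀ b)) := by
      intro b
      rw [VortexAux.D2H_row_kz Γ hz]
      obtain ⟨j, d⟩ := b
      fin_cases d <;> simp [VortexAux.kv, hGa]
    have haux : ∑ a : Idx n, (Γ a.1 * z₀ a) * u a = 0 := by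
      calc ∑ a : Idx n, (Γ a.1 * z₀ a) * u a
          = ∑ a : Idx n, (z₀ a * (D2H n Γ z₀).mulVec w a + ω * ((Γ a.1 * z₀ a) * w a)) := by
            refine Finset.sum_congr rfl fun a _ => ?_
            simp only [hu]
            have h1 := hΓ a.1
            field_simp
        _ = (∑ a : Idx n, z₀ a * (D2H n Γ z₀).mulVec w a)
            + ω * ∑ a : Idx n, (Γ a.1 * z₀ a) * w a := by
            rw [Finset.sum_add_distrib, Finset.mul_sum]
        _ = (∑ b : Idx n, (∑ a : Idx n, z₀ a * D2H n Γ z₀ a b) * w b) + ω * 0 := by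
            rw [VortexAux.sum_mulVec_swap, hw1]
        _ = ∑ b : Idx n, ω * ((Γ b.1 * z₀ b) * w b) := by
            rw [mul_zero, add_zero]
            refine Finset.sum_congr rfl fun b _ => ?_
            rw [hrow_z b]
            ring
        _ = ω * ∑ b : Idx n, (Γ b.1 * z₀ b) * w b := by rw [Finset.mul_sum]
        _ = 0 := by rw [hw1, mul_zero]
    have hauxk : ∑ a : Idx n, (Γ a.1 * VortexAux.kv z₀ a) * u a = 0 := by
      calc ∑ a : Idx n, (Γ a.1 * VortexAux.kv z₀ a) * u a
          = ∑ a : Idx n, (VortexAux.kv z₀ a * (D2H n Γ z₀).mulVec w a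
              + ω * ((Γ a.1 * VortexAux.kv z₀ a) * w a)) := by
            refine Finset.sum_congr rfl fun a _ => ?_
            simp only [hu]
            have h1 := hΓ a.1
            field_simp
        _ = (∑ a : Idx n, VortexAux.kv z₀ a * (D2H n Γ z₀).mulVec w a)
            + ω * ∑ a : Idx n, (Γ a.1 * VortexAux.kv z₀ a) * w a := by
            rw [Finset.sum_add_distrib, Finset.mul_sum]
        _ = (∑ b : Idx n, (∑ a : Idx n, VortexAux.kv z₀ a * D2H n Γ z₀ a b) * w b)
            + ω * 0 := by
            rw [VortexAux.sum_mulVec_swap, hw2]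
        _ = ∑ b : Idx n, -(ω * ((Γ b.1 * VortexAux.kv z₀ b) * w b)) := by
            rw [mul_zero, add_zero]
            refine Finset.sum_congr rfl fun b _ => ?_
            rw [hrow_kz b]
            ring
        _ = -(ω * ∑ b : Idx n, (Γ b.1 * VortexAux.kv z₀ b) * w b) := by
            rw [Finset.mul_sum, ← Finset.sum_neg_distrib]
        _ = 0 := by rw [hw2, mul_zero, neg_zero]
    constructor
    · rw [VortexAux.dot_kv, neg_eq_zero]
      simp only [VortexAux.kv_mul]
      exact hauxk
    · rw [VortexAux.dot_kv, neg_eq_zero]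
      have hkm2 : VortexAux.kv (fun a : Idx n => Γ a.1 * VortexAux.kv z₀ a)
          = fun a : Idx n => -((Γ a.1 * z₀ a)) := by
        rw [VortexAux.kv_mul]
        funext a
        rw [VortexAux.kv_kv]
        simp
      simp only [hkm2]
      calc ∑ a : Idx n, -(Γ a.1 * z₀ a) * u a
          = -∑ a : Idx n, (Γ a.1 * z₀ a) * u a := by
            rw [← Finset.sum_neg_distrib]
            exact Finset.sum_congr rfl fun a _ => by ring
        _ = 0 := by rw [haux, neg_zero]
  -- Part 4
  have part4 : vortexL n Γ ≠ 0 → Vspan n z₀ ⊓ VperpR n Γ z₀ = ⊥ := by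
    intro hL
    have hE := VortexAux.euler Γ hz
    rw [VortexAux.grad_repr] at hE
    have hS : ω * (∑ a : Idx n, (Γ a.1 * z₀ a) * z₀ a) = vortexL n Γ := by
      have hrw : ∑ a : Idx n, z₀ a * gradH n Γ z₀ a
          = -(ω * ∑ a : Idx n, (Γ a.1 * z₀ a) * z₀ a) := by
        rw [Finset.mul_sum, ← Finset.sum_neg_distrib]
        refine Finset.sum_congr rfl fun a _ => ?_
        rw [hGa a]
        ring
      rw [hrw] at hE
      linarith
    have hSne : (∑ a : Idx n, (Γ a.1 * z₀ a) * z₀ a) ≠ 0 := by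
      intro h0
      rw [h0, mul_zero] at hS
      exact hL hS.symm
    have hMzk : ∑ a : Idx n, (Γ a.1 * z₀ a) * VortexAux.kv z₀ a = 0 := by
      rw [VortexAux.sum_idx]
      apply Finset.sum_eq_zero
      intro i _
      simp [VortexAux.kv]
      ring
    have hMkz : ∑ a : Idx n, (Γ a.1 * VortexAux.kv z₀ a) * z₀ a = 0 := by
      rw [← hMzk]
      exact Finset.sum_congr rfl fun a _ => by ring
    have hMkk : ∑ a : Idx n, (Γ a.1 * VortexAux.kv z₀ a) * VortexAux.kv z₀ a
        = ∑ a : Idx n, (Γ a.1 * z₀ a) * z₀ a := by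
      rw [VortexAux.sum_idx, VortexAux.sum_idx]
      apply Finset.sum_congr rfl
      intro i _
      simp [VortexAux.kv]
      ring
    rw [eq_bot_iff]
    intro v hv
    obtain ⟨hv1, hv2⟩ := Submodule.mem_inf.mp hv
    rw [Vspan, Submodule.mem_span_pair] at hv1
    obtain ⟨α, β, rfl⟩ := hv1
    rw [VortexAux.mem_VperpR_iff] at hv2
    obtain ⟨h1, h2⟩ := hv2
    have hsplit : ∀ (r : Idx n → ℝ),
        ∑ a : Idx n, (Γ a.1 * r a) * (α • z₀ + β • (Kmat n).mulVec z₀) a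
        = α * ∑ a : Idx n, (Γ a.1 * r a) * z₀ a
          + β * ∑ a : Idx n, (Γ a.1 * r a) * VortexAux.kv z₀ a := by
      intro r
      rw [Finset.mul_sum, Finset.mul_sum, ← Finset.sum_add_distrib]
      refine Finset.sum_congr rfl fun a _ => ?_
      simp only [Pi.add_apply, Pi.smul_apply, VortexAux.Kmat_mulVec, smul_eq_mul]
      ring
    rw [hsplit z₀, hMzk, mul_zero, add_zero] at h1
    rw [hsplit (VortexAux.kv z₀), hMkz, hMkk, mul_zero, zero_add] at h2
    have hα : α = 0 := by
      rcases mul_eq_zero.mp h1 with h | h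
      · exact h
      · exact absurd h hSne
    have hβ : β = 0 := by
      rcases mul_eq_zero.mp h2 with h | h
      · exact h
      · exact absurd h hSne
    rw [Submodule.mem_bot, hα, hβ]
    simp
  exact ⟨part1, part2, part3, part4⟩
end
end
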